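/- arXiv:2605.21451 — 5 statements merged into one kernel-verified Lean document; each statement's English description precedes it below -/
import Mathlib

section
/- Let μ be a finite signed Borel measure on ℝ^d such that μ(H) = 0 for every open half-space H = {x : wᵀx + b > 0} and every closed half-space {x : wᵀx + b ≥ 0}, for all w ∈ ℝ^d and b ∈ ℝ. Then μ = 0. -/
open MeasureTheory Real Complex Filter Metric
open scoped FourierTransform RealInnerProductSpace Topology

namespace HalfspaceAux

lemma integrable_comp_snd {E : Type*} [NormedAddCommGroup E]
    {α β : Type*} [MeasurableSpace α] [MeasurableSpace β]
    (μ : Measure α) [IsFiniteMeasure μ] {ν : Measure β} [SFinite ν]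
    {g : β → E} (hg : Integrable g ν) :
    Integrable (fun p : α × β => g p.2) (μ.prod ν) := by
  have h1 : Integrable g (Measure.map Prod.snd (μ.prod ν)) := by
    rw [Measure.map_snd_prod]
    exact hg.smul_measure (measure_ne_top μ _)
  exact (integrable_map_measure h1.1 measurable_snd.aemeasurable).1 h1

lemma div_inv_eq' {a c : ℂ} : a / c⁻¹ = a * c := by
  rw [div_eq_mul_inv, inv_inv]

variable {V : Type*} [NormedAddCommGroup V] [InnerProductSpace ℝ V]
  [MeasurableSpace V] [BorelSpace V] [FiniteDimensional ℝ V]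

lemma continuous_char (w : V) : Continuous fun v : V => ((Real.fourierChar (-⟪w, v⟫)) : ℂ) :=
  continuous_subtype_val.comp <| Real.continuous_fourierChar.comp <|
    (continuous_const.inner continuous_id).neg

lemma integral_fourierIntegral_eq
    (P N : Measure V) [IsFiniteMeasure P] [IsFiniteMeasure N]
    (hchar : ∀ w : V, ∫ v, ((Real.fourierChar (-⟪w, v⟫)) : ℂ) ∂P
      = ∫ v, ((Real.fourierChar (-⟪w, v⟫)) : ℂ) ∂N)
    {g : V → ℂ} (hg : Integrable g volume) :
    ∫ v, 𝓕 g v ∂P = ∫ v, 𝓕 g v ∂N := by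
  have key : ∀ (Q : Measure V), IsFiniteMeasure Q →
      ∫ v, 𝓕 g v ∂Q
        = ∫ w, (∫ v, ((Real.fourierChar (-⟪w, v⟫)) : ℂ) ∂Q) * g w := by
    intro Q hQ
    have hcont : Continuous fun p : V × V => ((Real.fourierChar (-⟪p.2, p.1⟫)) : ℂ) :=
      continuous_subtype_val.comp <| Real.continuous_fourierChar.comp <|
        ((continuous_snd.inner continuous_fst)).neg
    have hgsnd : Integrable (fun p : V × V => g p.2) (Q.prod volume) :=
      integrable_comp_snd Q hg
    have hint : Integrable
        (Function.uncurry fun v w : V => ((Real.fourierChar (-⟪w, v⟫)) : ℂ) * g w)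
        (Q.prod volume) := by
      refine Integrable.mono' hgsnd.norm (hcont.aestronglyMeasurable.mul hgsnd.1) ?_
      filter_upwards with p
      simp only [Function.uncurry, norm_mul]
      rw [Circle.norm_coe, one_mul]
    calc ∫ v, 𝓕 g v ∂Q
        = ∫ v, (∫ w, ((Real.fourierChar (-⟪w, v⟫)) : ℂ) * g w ∂volume) ∂Q := by
          refine integral_congr_ae (Filter.Eventually.of_forall fun v => ?_)
          rw [Real.fourier_eq]
          refine integral_congr_ae (Filter.Eventually.of_forall fun w => ?_)
          dsimp only
          rw [Circle.smul_def, smul_eq_mul]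
      _ = ∫ w, (∫ v, ((Real.fourierChar (-⟪w, v⟫)) : ℂ) * g w ∂Q) ∂volume := by
          exact integral_integral_swap hint
      _ = ∫ w, (∫ v, ((Real.fourierChar (-⟪w, v⟫)) : ℂ) ∂Q) * g w ∂volume := by
          refine integral_congr_ae (Filter.Eventually.of_forall fun w => ?_)
          dsimp only
          rw [integral_mul_const]
  rw [key P inferInstance, key N inferInstance]
  refine integral_congr_ae (Filter.Eventually.of_forall fun w => ?_)
  dsimp only
  rw [hchar w]


lemma integral_gaussian_eq
    (P N : Measure V) [IsFiniteMeasure P] [IsFiniteMeasure N]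
    (hchar : ∀ w : V, ∫ v, ((Real.fourierChar (-⟪w, v⟫)) : ℂ) ∂P
      = ∫ v, ((Real.fourierChar (-⟪w, v⟫)) : ℂ) ∂N)
    {c : ℝ} (hc : 0 < c) (x : V) :
    ∫ v, Complex.exp (-(π : ℂ) ^ 2 * (c : ℂ) * (‖x - v‖ : ℂ) ^ 2) ∂P
      = ∫ v, Complex.exp (-(π : ℂ) ^ 2 * (c : ℂ) * (‖x - v‖ : ℂ) ^ 2) ∂N := by
  set b : ℂ := ((c⁻¹ : ℝ) : ℂ) with hbdef
  have hb : 0 < b.re := by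
    simp only [hbdef, Complex.ofReal_re]
    positivity
  have hbne : b ≠ 0 := by
    intro h
    rw [h] at hb
    simp at hb
  have hg : Integrable (fun w : V => Complex.exp (-b * (‖w‖ : ℂ) ^ 2
      + 2 * (π : ℂ) * Complex.I * ((⟪x, w⟫ : ℝ) : ℂ))) volume :=
    GaussianFourier.integrable_cexp_neg_mul_sq_norm_add hb (2 * (π : ℂ) * Complex.I) x
  have h := integral_fourierIntegral_eq P N hchar hg
  have hrw : ∀ v : V, 𝓕 (fun w : V => Complex.exp (-b * (‖w‖ : ℂ) ^ 2
        + 2 * (π : ℂ) * Complex.I * ((⟪x, w⟫ : ℝ) : ℂ))) v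
      = ((π : ℂ) / b) ^ ((Module.finrank ℝ V : ℂ) / 2)
        * Complex.exp (-(π : ℂ) ^ 2 * (c : ℂ) * (‖x - v‖ : ℂ) ^ 2) := by
    intro v
    rw [fourier_gaussian_innerProductSpace' hb x v]
    congr 1
    rw [hbdef, Complex.ofReal_inv]
    congr 1
    rw [div_inv_eq']
    ring
  simp_rw [hrw] at h
  rw [integral_const_mul, integral_const_mul] at h
  have hne : ((π : ℂ) / b) ^ ((Module.finrank ℝ V : ℂ) / 2) ≠ 0 := by
    rw [Complex.cpow_def_of_ne_zero (div_ne_zero (by exact_mod_cast Real.pi_ne_zero) hbne)]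
    exact Complex.exp_ne_zero _
  exact mul_left_cancel₀ hne h


lemma integral_eq_of_gaussian_eq
    (P N : Measure V) [IsFiniteMeasure P] [IsFiniteMeasure N]
    (hgauss : ∀ c : ℝ, 0 < c → ∀ x : V,
      ∫ v, Complex.exp (-(π : ℂ) ^ 2 * (c : ℂ) * (‖x - v‖ : ℂ) ^ 2) ∂P
        = ∫ v, Complex.exp (-(π : ℂ) ^ 2 * (c : ℂ) * (‖x - v‖ : ℂ) ^ 2) ∂N)
    {f : V → ℂ} (hf : Continuous f) (hsupp : HasCompactSupport f) :
    ∫ v, f v ∂P = ∫ v, f v ∂N := by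
  have hfi : Integrable f volume := hf.integrable_of_hasCompactSupport hsupp
  obtain ⟨C, hC⟩ := hf.bounded_above_of_compact_support hsupp
  have hC0 : 0 ≤ C := le_trans (norm_nonneg (f 0)) (hC 0)
  set n : ℕ := Module.finrank ℝ V with hn
  set S : ℝ → V → ℂ := fun c v => ∫ w,
    (((π : ℂ) * (c : ℂ)) ^ ((n : ℂ) / 2)
      * Complex.exp (-(π : ℂ) ^ 2 * (c : ℂ) * (‖v - w‖ : ℂ) ^ 2)) • f w with hS
  -- norm of the kernel
  have knorm : ∀ c : ℝ, 0 < c → ∀ v w : V,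
      ‖((π : ℂ) * (c : ℂ)) ^ ((n : ℂ) / 2)
        * Complex.exp (-(π : ℂ) ^ 2 * (c : ℂ) * (‖v - w‖ : ℂ) ^ 2)‖
      = (π * c) ^ ((n : ℝ) / 2) * rexp (-(π ^ 2 * c) * ‖v - w‖ ^ 2) := by
    intro c hc v w
    rw [norm_mul]
    congr 1
    · have h1 : ((π : ℂ) * (c : ℂ)) = (((π * c : ℝ)) : ℂ) := by push_cast; ring
      have h2 : ((n : ℂ) / 2) = (((n / 2 : ℝ)) : ℂ) := by push_cast; ring
      rw [h1, h2, Complex.norm_cpow_eq_rpow_re_of_pos (by positivity),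
        Complex.ofReal_re]
    · have h3 : (-(π : ℂ) ^ 2 * (c : ℂ) * (‖v - w‖ : ℂ) ^ 2)
          = (((-(π ^ 2 * c) * ‖v - w‖ ^ 2 : ℝ)) : ℂ) := by push_cast; ring
      rw [h3, Complex.norm_exp, Complex.ofReal_re]
  -- the real kernel is integrable with integral one
  have kintegrable : ∀ c : ℝ, 0 < c → ∀ v : V,
      Integrable (fun w => (π * c) ^ ((n : ℝ) / 2)
        * rexp (-(π ^ 2 * c) * ‖v - w‖ ^ 2)) volume := by
    intro c hc v
    have h0 := GaussianFourier.integrable_cexp_neg_mul_sq_norm_add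
      (b := (((π ^ 2 * c : ℝ)) : ℂ))
      (by rw [Complex.ofReal_re]; positivity) (0 : ℂ) (0 : V)
    have h1 : Integrable (fun u : V => rexp (-(π ^ 2 * c) * ‖u‖ ^ 2)) volume := by
      refine h0.norm.congr (Filter.Eventually.of_forall fun u => ?_)
      dsimp only
      rw [show (-(((π ^ 2 * c : ℝ)) : ℂ) * (‖u‖ : ℂ) ^ 2 + 0 * ((inner ℝ (0:V) u : ℝ) : ℂ))
          = (((-(π ^ 2 * c) * ‖u‖ ^ 2 : ℝ)) : ℂ) by push_cast; ring]
      rw [Complex.norm_exp_ofReal]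
    exact ((h1.comp_sub_left v).const_mul _)
  have kint : ∀ c : ℝ, 0 < c → ∀ v : V,
      ∫ w, (π * c) ^ ((n : ℝ) / 2) * rexp (-(π ^ 2 * c) * ‖v - w‖ ^ 2) = 1 := by
    intro c hc v
    rw [integral_const_mul]
    rw [integral_sub_left_eq_self (fun u : V => rexp (-(π ^ 2 * c) * ‖u‖ ^ 2)) volume v]
    rw [GaussianFourier.integral_rexp_neg_mul_sq_norm (by positivity : (0:ℝ) < π ^ 2 * c)]
    rw [← Real.mul_rpow (by positivity) (by positivity)]
    rw [show (π * c) * (π / (π ^ 2 * c)) = 1 by field_simp]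
    exact Real.one_rpow _
  -- joint continuity of the integrand
  have hKcont : ∀ c : ℝ, Continuous fun p : V × V =>
      (((π : ℂ) * (c : ℂ)) ^ ((n : ℂ) / 2)
        * Complex.exp (-(π : ℂ) ^ 2 * (c : ℂ) * (‖p.1 - p.2‖ : ℂ) ^ 2)) • f p.2 := by
    intro c
    refine Continuous.fun_smul ?_ (hf.comp continuous_snd)
    refine continuous_const.mul (Complex.continuous_exp.comp ?_)
    exact continuous_const.mul
      ((Complex.continuous_ofReal.comp
        ((continuous_fst.sub continuous_snd).norm)).pow 2)
  -- dominated convergence setup for a finite measure Q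
  have tendQ : ∀ (Q : Measure V), IsFiniteMeasure Q →
      Filter.Tendsto (fun c : ℝ => ∫ v, S c v ∂Q) atTop (𝓝 (∫ v, f v ∂Q)) := by
    intro Q hQ
    refine tendsto_integral_filter_of_dominated_convergence (fun _ => C) ?_ ?_ ?_ ?_
    · filter_upwards with c
      exact ((hKcont c).aestronglyMeasurable (μ := Q.prod volume)).integral_prod_right'
    · filter_upwards [Ioi_mem_atTop (0:ℝ)] with c (hc : 0 < c)
      filter_upwards with v
      calc ‖S c v‖ ≤ ∫ w, ‖(((π : ℂ) * (c : ℂ)) ^ ((n : ℂ) / 2)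
            * Complex.exp (-(π : ℂ) ^ 2 * (c : ℂ) * (‖v - w‖ : ℂ) ^ 2)) • f w‖ :=
          norm_integral_le_integral_norm _
        _ ≤ ∫ w, (π * c) ^ ((n : ℝ) / 2) * rexp (-(π ^ 2 * c) * ‖v - w‖ ^ 2) * C := by
          refine integral_mono_of_nonneg (Filter.Eventually.of_forall fun w => norm_nonneg _)
            ((kintegrable c hc v).mul_const C) (Filter.Eventually.of_forall fun w => ?_)
          dsimp only
          rw [norm_smul, knorm c hc v w]
          exact mul_le_mul_of_nonneg_left (hC w) (by positivity)
        _ = C := by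
          rw [integral_mul_const, kint c hc v, one_mul]
    · exact integrable_const C
    · filter_upwards with v
      exact Real.tendsto_integral_gaussian_smul' hfi hf.continuousAt
  -- for fixed c > 0 the smoothed integrals agree
  have eqPN : ∀ c : ℝ, 0 < c → ∫ v, S c v ∂P = ∫ v, S c v ∂N := by
    intro c hc
    have key2 : ∀ (Q : Measure V), IsFiniteMeasure Q →
        ∫ v, S c v ∂Q = ∫ w, (∫ v,
          Complex.exp (-(π : ℂ) ^ 2 * (c : ℂ) * (‖v - w‖ : ℂ) ^ 2) ∂Q)
            * (((π : ℂ) * (c : ℂ)) ^ ((n : ℂ) / 2) * f w) ∂volume := by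
      intro Q hQ
      have hint : Integrable (Function.uncurry fun v w : V =>
          (((π : ℂ) * (c : ℂ)) ^ ((n : ℂ) / 2)
            * Complex.exp (-(π : ℂ) ^ 2 * (c : ℂ) * (‖v - w‖ : ℂ) ^ 2)) • f w)
          (Q.prod volume) := by
        refine Integrable.mono'
          (((integrable_comp_snd Q hfi.norm)).const_mul ((π * c) ^ ((n : ℝ) / 2)))
          ((hKcont c).aestronglyMeasurable (μ := Q.prod volume)) ?_
        filter_upwards with p
        simp only [Function.uncurry]
        rw [norm_smul, knorm c hc p.1 p.2]
        have h1 : rexp (-(π ^ 2 * c) * ‖p.1 - p.2‖ ^ 2) ≤ 1 := by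
          rw [Real.exp_le_one_iff]
          have : (0:ℝ) ≤ (π ^ 2 * c) * ‖p.1 - p.2‖ ^ 2 := by positivity
          linarith
        calc (π * c) ^ ((n : ℝ) / 2) * rexp (-(π ^ 2 * c) * ‖p.1 - p.2‖ ^ 2) * ‖f p.2‖
            ≤ (π * c) ^ ((n : ℝ) / 2) * 1 * ‖f p.2‖ := by
              have hb : (0:ℝ) ≤ (π * c) ^ ((n : ℝ) / 2) := by positivity
              exact mul_le_mul_of_nonneg_right
                (mul_le_mul_of_nonneg_left h1 hb) (norm_nonneg _)
          _ = (π * c) ^ ((n : ℝ) / 2) * ‖f p.2‖ := by ring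
      calc ∫ v, S c v ∂Q
          = ∫ w, (∫ v, (((π : ℂ) * (c : ℂ)) ^ ((n : ℂ) / 2)
              * Complex.exp (-(π : ℂ) ^ 2 * (c : ℂ) * (‖v - w‖ : ℂ) ^ 2)) • f w ∂Q)
              ∂volume :=
            integral_integral_swap hint
        _ = _ := by
            refine integral_congr_ae (Filter.Eventually.of_forall fun w => ?_)
            dsimp only
            have : ∀ v : V, (((π : ℂ) * (c : ℂ)) ^ ((n : ℂ) / 2)
                * Complex.exp (-(π : ℂ) ^ 2 * (c : ℂ) * (‖v - w‖ : ℂ) ^ 2)) • f w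
                = Complex.exp (-(π : ℂ) ^ 2 * (c : ℂ) * (‖v - w‖ : ℂ) ^ 2)
                  * (((π : ℂ) * (c : ℂ)) ^ ((n : ℂ) / 2) * f w) := by
              intro v
              rw [smul_eq_mul]
              ring
            simp_rw [this]
            rw [integral_mul_const]
    rw [key2 P inferInstance, key2 N inferInstance]
    refine integral_congr_ae (Filter.Eventually.of_forall fun w => ?_)
    dsimp only
    congr 1
    have h := hgauss c hc w
    simp_rw [norm_sub_rev w _] at h
    exact h
  -- conclude by uniqueness of limits
  refine tendsto_nhds_unique (tendQ P inferInstance) ?_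
  refine Filter.Tendsto.congr' ?_ (tendQ N inferInstance)
  filter_upwards [Ioi_mem_atTop (0:ℝ)] with c (hc : 0 < c)
  exact (eqPN c hc).symm


lemma measure_eq_of_integral_cc_eq
    (P N : Measure V) [IsFiniteMeasure P] [IsFiniteMeasure N]
    (huniv : P Set.univ = N Set.univ)
    (h : ∀ f : V → ℂ, Continuous f → HasCompactSupport f → ∫ v, f v ∂P = ∫ v, f v ∂N) :
    P = N := by
  refine ext_of_generate_finite {U : Set V | IsOpen U} ?_ ?_ ?_ huniv
  · rw [BorelSpace.measurable_eq (α := V)]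
    rfl
  · intro s hs t ht _
    exact hs.inter ht
  · intro U hU
    by_cases hUc : Uᶜ = ∅
    · rw [show U = Set.univ from by
        rw [← Set.compl_empty_iff]; exact hUc]
      exact huniv
    have hUcne : (Uᶜ : Set V).Nonempty := Set.nonempty_iff_ne_empty.2 hUc
    have hUcclosed : IsClosed (Uᶜ : Set V) := hU.isClosed_compl
    -- approximating functions
    set g : ℕ → V → ℝ := fun m x =>
      (min 1 (m * infDist x Uᶜ)) * (max 0 (min 1 (m - ‖x‖))) with hg
    have hgcont : ∀ m, Continuous (g m) := by
      intro m
      exact ((continuous_const.min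
          (continuous_const.mul (continuous_infDist_pt _))).mul
        (continuous_const.max (continuous_const.min
          (continuous_const.sub continuous_norm))))
    have hgsupp : ∀ m : ℕ, HasCompactSupport (g m) := by
      intro m
      refine HasCompactSupport.intro (isCompact_closedBall (0 : V) m) fun x hx => ?_
      have hxn : (m : ℝ) < ‖x‖ := by
        simpa [Metric.mem_closedBall, dist_zero_right] using hx
      have : max 0 (min 1 ((m : ℝ) - ‖x‖)) = 0 := by
        refine max_eq_left ?_
        refine le_trans (min_le_right _ _) ?_
        linarith
      simp only [hg, this, mul_zero]
    have hg01 : ∀ m x, 0 ≤ g m x ∧ g m x ≤ 1 := by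
      intro m x
      have h1 : 0 ≤ min 1 ((m : ℝ) * infDist x Uᶜ) :=
        le_min (by norm_num) (mul_nonneg (Nat.cast_nonneg m) infDist_nonneg)
      have h2 : min 1 ((m : ℝ) * infDist x Uᶜ) ≤ 1 := min_le_left _ _
      have h3 : (0:ℝ) ≤ max 0 (min 1 ((m : ℝ) - ‖x‖)) := le_max_left _ _
      have h4 : max 0 (min 1 ((m : ℝ) - ‖x‖)) ≤ 1 :=
        max_le (by norm_num) (min_le_left _ _)
      constructor
      · exact mul_nonneg h1 h3
      · calc g m x ≤ 1 * 1 := mul_le_mul h2 h4 h3 (by norm_num)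
          _ = 1 := by norm_num
    have hgtend : ∀ x : V, Filter.Tendsto (fun m => g m x) atTop
        (𝓝 (Set.indicator U (fun _ => (1:ℝ)) x)) := by
      intro x
      by_cases hx : x ∈ U
      · have hd : 0 < infDist x Uᶜ :=
          (hUcclosed.notMem_iff_infDist_pos hUcne).1 (by simpa using hx)
        rw [Set.indicator_of_mem hx]
        have : ∀ᶠ m : ℕ in atTop, g m x = 1 := by
          obtain ⟨m₀, hm₀⟩ := exists_nat_gt (max (1 / infDist x Uᶜ) (‖x‖ + 1))
          filter_upwards [eventually_ge_atTop m₀] with m hm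
          have hmm : (m₀ : ℝ) ≤ m := by exact_mod_cast hm
          have hma : 1 / infDist x Uᶜ < (m : ℝ) :=
            lt_of_le_of_lt (le_max_left _ _) (lt_of_lt_of_le hm₀ hmm)
          have hmb : ‖x‖ + 1 < (m : ℝ) :=
            lt_of_le_of_lt (le_max_right _ _) (lt_of_lt_of_le hm₀ hmm)
          have e1 : min 1 ((m : ℝ) * infDist x Uᶜ) = 1 := by
            refine min_eq_left ?_
            rw [div_lt_iff₀ hd] at hma
            nlinarith [hd]
          have e2 : max 0 (min 1 ((m : ℝ) - ‖x‖)) = 1 := by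
            rw [min_eq_left (by linarith), max_eq_right (by linarith)]
          simp only [hg, e1, e2, one_mul]
        exact Filter.Tendsto.congr' (this.mono fun m hm => hm.symm) tendsto_const_nhds
      · rw [Set.indicator_of_notMem hx]
        have : ∀ m : ℕ, g m x = 0 := by
          intro m
          have : infDist x Uᶜ = 0 := infDist_zero_of_mem (by simpa using hx)
          simp [hg, this]
        simp only [this]
        exact tendsto_const_nhds
    -- integrals of g m agree
    have hgeq : ∀ m : ℕ, ∫ x, g m x ∂P = ∫ x, g m x ∂N := by
      intro m
      have := h (fun x => ((g m x : ℝ) : ℂ))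
        (Complex.continuous_ofReal.comp (hgcont m))
        ((hgsupp m).comp_left (g := Complex.ofReal) Complex.ofReal_zero)
      have e1 : ∫ v, ((g m v : ℝ) : ℂ) ∂P = ((∫ v, g m v ∂P : ℝ) : ℂ) := integral_ofReal
      have e2 : ∫ v, ((g m v : ℝ) : ℂ) ∂N = ((∫ v, g m v ∂N : ℝ) : ℂ) := integral_ofReal
      rw [e1, e2] at this
      exact_mod_cast this
    -- dominated convergence
    have hDCT : ∀ (Q : Measure V), IsFiniteMeasure Q →
        Filter.Tendsto (fun m => ∫ x, g m x ∂Q) atTop (𝓝 ((Q U).toReal)) := by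
      intro Q hQ
      have := tendsto_integral_filter_of_dominated_convergence
        (μ := Q) (F := fun m x => g m x) (f := Set.indicator U (fun _ => (1:ℝ)))
        (fun _ => 1)
        (Filter.Eventually.of_forall fun m => (hgcont m).aestronglyMeasurable)
        (Filter.Eventually.of_forall fun m =>
          Filter.Eventually.of_forall fun x => by
            rw [Real.norm_eq_abs, _root_.abs_of_nonneg (hg01 m x).1]
            exact (hg01 m x).2)
        (integrable_const 1)
        (Filter.Eventually.of_forall hgtend)
      rwa [integral_indicator_const (1:ℝ) hU.measurableSet, smul_eq_mul, mul_one] at this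
    have := tendsto_nhds_unique
      ((hDCT P inferInstance).congr' (Filter.Eventually.of_forall fun m => hgeq m))
      (hDCT N inferInstance)
    exact (ENNReal.toReal_eq_toReal_iff' (measure_ne_top P U) (measure_ne_top N U)).1 this

end HalfspaceAux

open HalfspaceAux in
/-- A finite signed Borel measure vanishing on all open and closed
half-spaces is the zero measure. -/
theorem signedMeasure_zero_of_vanishing_on_halfspaces
    (d : ℕ) (μ : MeasureTheory.SignedMeasure (Fin d → ℝ))
    (hopen : ∀ (w : Fin d → ℝ) (b : ℝ), μ {x | 0 < (∑ i, w i * x i) + b} = 0)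
    (hclosed : ∀ (w : Fin d → ℝ) (b : ℝ), μ {x | 0 ≤ (∑ i, w i * x i) + b} = 0) :
    μ = 0 := by
  classical
  set P₀ := μ.toJordanDecomposition.posPart with hP₀
  set N₀ := μ.toJordanDecomposition.negPart with hN₀
  have hμapp : ∀ s : Set (Fin d → ℝ), MeasurableSet s →
      μ s = (P₀ s).toReal - (N₀ s).toReal := by
    intro s hs
    conv_lhs => rw [← μ.toSignedMeasure_toJordanDecomposition]
    rw [show μ.toJordanDecomposition.toSignedMeasure
        = P₀.toSignedMeasure - N₀.toSignedMeasure from rfl]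
    exact Measure.toSignedMeasure_sub_apply hs
  have hLcont : ∀ w : Fin d → ℝ, Continuous fun x : Fin d → ℝ => ∑ i, w i * x i := by
    intro w
    exact continuous_finset_sum _ fun i _ => continuous_const.mul (continuous_apply i)
  have hmeas : ∀ (w : Fin d → ℝ) (b : ℝ),
      MeasurableSet {x : Fin d → ℝ | 0 ≤ (∑ i, w i * x i) + b} := by
    intro w b
    have : {x : Fin d → ℝ | 0 ≤ (∑ i, w i * x i) + b}
        = (fun x : Fin d → ℝ => (∑ i, w i * x i) + b) ⁻¹' Set.Ici 0 := by
      ext x; simp [Set.mem_Ici]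
    rw [this]
    exact ((hLcont w).add continuous_const).measurable measurableSet_Ici
  have hPN : ∀ (w : Fin d → ℝ) (b : ℝ),
      P₀ {x | 0 ≤ (∑ i, w i * x i) + b} = N₀ {x | 0 ≤ (∑ i, w i * x i) + b} := by
    intro w b
    have h0 := hclosed w b
    rw [hμapp _ (hmeas w b)] at h0
    exact (ENNReal.toReal_eq_toReal_iff' (measure_ne_top _ _) (measure_ne_top _ _)).1
      (sub_eq_zero.mp h0)
  have huniv0 : P₀ Set.univ = N₀ Set.univ := by
    have h0 := hPN 0 0
    have : {x : Fin d → ℝ | 0 ≤ (∑ i, (0 : Fin d → ℝ) i * x i) + 0} = Set.univ := by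
      ext x; simp
    rwa [this] at h0
  -- transfer to Euclidean space
  set e : (Fin d → ℝ) ≃ᵐ EuclideanSpace ℝ (Fin d) :=
    MeasurableEquiv.toLp 2 (Fin d → ℝ) with he
  set P : Measure (EuclideanSpace ℝ (Fin d)) := P₀.map e with hP
  set N : Measure (EuclideanSpace ℝ (Fin d)) := N₀.map e with hN
  haveI : IsFiniteMeasure P := by
    refine ⟨?_⟩
    rw [hP, MeasurableEquiv.map_apply]
    exact measure_lt_top _ _
  haveI : IsFiniteMeasure N := by
    refine ⟨?_⟩
    rw [hN, MeasurableEquiv.map_apply]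
    exact measure_lt_top _ _
  have huniv : P Set.univ = N Set.univ := by
    rw [hP, hN, MeasurableEquiv.map_apply, MeasurableEquiv.map_apply, Set.preimage_univ,
      huniv0]
  have hchar : ∀ w : EuclideanSpace ℝ (Fin d),
      ∫ v, ((Real.fourierChar (-⟪w, v⟫)) : ℂ) ∂P
        = ∫ v, ((Real.fourierChar (-⟪w, v⟫)) : ℂ) ∂N := by
    intro w
    set L : (Fin d → ℝ) → ℝ := fun x => ∑ i, w i * x i with hL
    have hLc : Continuous L := hLcont w
    have hQ : P₀.map L = N₀.map L := by
      refine ext_of_generate_finite (Set.range Set.Ici) ?_ isPiSystem_Ici ?_ ?_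
      · rw [BorelSpace.measurable_eq (α := ℝ), borel_eq_generateFrom_Ici]
      · rintro s ⟨a, rfl⟩
        rw [Measure.map_apply hLc.measurable measurableSet_Ici,
          Measure.map_apply hLc.measurable measurableSet_Ici]
        have hset : L ⁻¹' Set.Ici a = {x : Fin d → ℝ | 0 ≤ L x + (-a)} := by
          ext x
          simp only [Set.mem_preimage, Set.mem_Ici, Set.mem_setOf_eq]
          constructor <;> intro <;> linarith
        rw [hset]
        exact hPN w (-a)
      · rw [Measure.map_apply hLc.measurable MeasurableSet.univ,
          Measure.map_apply hLc.measurable MeasurableSet.univ, Set.preimage_univ, huniv0]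
    have hFc : Continuous fun t : ℝ => ((Real.fourierChar (-t)) : ℂ) :=
      continuous_subtype_val.comp (Real.continuous_fourierChar.comp continuous_neg)
    have hinner : ∀ x : Fin d → ℝ, (⟪w, e x⟫ : ℝ) = L x := by
      intro x
      simp only [PiLp.inner_apply, RCLike.inner_apply, conj_trivial, hL]
      exact Finset.sum_congr rfl fun i _ => mul_comm _ _
    calc ∫ v, ((Real.fourierChar (-⟪w, v⟫)) : ℂ) ∂P
        = ∫ x, ((Real.fourierChar (-(L x))) : ℂ) ∂P₀ := by
          rw [hP, integral_map e.measurable.aemeasurable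
            (continuous_char w).aestronglyMeasurable]
          refine integral_congr_ae (Filter.Eventually.of_forall fun x => ?_)
          dsimp only
          rw [hinner x]
      _ = ∫ t, ((Real.fourierChar (-t)) : ℂ) ∂(P₀.map L) :=
          (integral_map hLc.measurable.aemeasurable hFc.aestronglyMeasurable).symm
      _ = ∫ t, ((Real.fourierChar (-t)) : ℂ) ∂(N₀.map L) := by rw [hQ]
      _ = ∫ x, ((Real.fourierChar (-(L x))) : ℂ) ∂N₀ :=
          integral_map hLc.measurable.aemeasurable hFc.aestronglyMeasurable
      _ = ∫ v, ((Real.fourierChar (-⟪w, v⟫)) : ℂ) ∂N := by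
          rw [hN, integral_map e.measurable.aemeasurable
            (continuous_char w).aestronglyMeasurable]
          refine integral_congr_ae (Filter.Eventually.of_forall fun x => ?_)
          dsimp only
          rw [hinner x]
  have hPeqN : P = N := by
    refine measure_eq_of_integral_cc_eq P N huniv ?_
    intro f hf hsupp
    exact integral_eq_of_gaussian_eq P N
      (fun c hc x => integral_gaussian_eq P N hchar hc x) hf hsupp
  have hP₀N₀ : P₀ = N₀ := by
    have h1 : (P₀.map e).map e.symm = P₀ := by
      rw [Measure.map_map e.symm.measurable e.measurable, MeasurableEquiv.symm_comp_self,
        Measure.map_id]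
    have h2 : (N₀.map e).map e.symm = N₀ := by
      rw [Measure.map_map e.symm.measurable e.measurable, MeasurableEquiv.symm_comp_self,
        Measure.map_id]
    rw [← h1, ← h2]
    rw [hP] at hPeqN
    rw [hPeqN, ← hN]
  have hfinal : μ = P₀.toSignedMeasure - N₀.toSignedMeasure := by
    conv_lhs => rw [← μ.toSignedMeasure_toJordanDecomposition]
    rfl
  rw [hfinal]
  simp only [hP₀N₀]
  exact sub_self _
end

section
/- Let σ : ℝ → ℝ be a continuous sigmoidal function. Then the linear span of the functions x ↦ σ(wᵀx + b), for w ∈ ℝ^d and b ∈ ℝ, is dense in C([0,1]^d) with respect to the uniform norm. -/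
open Filter Finset Set

lemma sig_bound {σ : ℝ → ℝ} (hc : Continuous σ)
    (h0 : Tendsto σ atBot (nhds 0)) (h1 : Tendsto σ atTop (nhds 1)) :
    ∃ B : ℝ, 1 ≤ B ∧ ∀ t, |σ t| ≤ B := by
  have e1 : ∀ᶠ t in atTop, |σ t - 1| ≤ 1 := by
    have hmem : Metric.closedBall (1:ℝ) 1 ∈ nhds 1 := Metric.closedBall_mem_nhds _ one_pos
    filter_upwards [h1.eventually hmem] with t ht
    simpa [Metric.mem_closedBall, Real.dist_eq] using ht
  have e0 : ∀ᶠ t in atBot, |σ t| ≤ 1 := by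
    have hmem : Metric.closedBall (0:ℝ) 1 ∈ nhds 0 := Metric.closedBall_mem_nhds _ one_pos
    filter_upwards [h0.eventually hmem] with t ht
    simpa [Metric.mem_closedBall, Real.dist_eq] using ht
  obtain ⟨M, hM⟩ := eventually_atTop.mp e1
  obtain ⟨m, hm⟩ := eventually_atBot.mp e0
  obtain ⟨C, hC⟩ := (isCompact_Icc (a := min m M) (b := max m M)).exists_bound_of_continuousOn
    hc.continuousOn
  refine ⟨max (max C 2) 1, le_max_right _ _, fun t => ?_⟩
  rcases le_or_gt t m with h | h
  · exact le_trans (hm t h) (le_trans (le_trans one_le_two (le_max_right C 2)) (le_max_left _ _))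
  rcases le_or_gt M t with h' | h'
  · have h2 := hM t h'
    have : |σ t| ≤ 2 := by
      have : |σ t| ≤ |σ t - 1| + 1 := by
        have := abs_add_le (σ t - 1) 1
        simpa using this
      linarith
    exact le_trans this (le_trans (le_max_right C 2) (le_max_left _ _))
  · have hmem : t ∈ Set.Icc (min m M) (max m M) :=
      ⟨le_trans (min_le_left _ _) h.le, le_trans h'.le (le_max_right _ _)⟩
    have := hC t hmem
    rw [Real.norm_eq_abs] at this
    exact le_trans this (le_trans (le_max_left C 2) (le_max_left _ _))

lemma sig_tail {σ : ℝ → ℝ}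
    (h0 : Tendsto σ atBot (nhds 0)) (h1 : Tendsto σ atTop (nhds 1))
    {η : ℝ} (hη : 0 < η) :
    ∃ T : ℝ, 0 < T ∧ (∀ s, T ≤ s → |σ s - 1| ≤ η) ∧ (∀ s, s ≤ -T → |σ s| ≤ η) := by
  have e1 : ∀ᶠ t in atTop, |σ t - 1| ≤ η := by
    have hmem : Metric.closedBall (1:ℝ) η ∈ nhds 1 := Metric.closedBall_mem_nhds _ hη
    filter_upwards [h1.eventually hmem] with t ht
    simpa [Metric.mem_closedBall, Real.dist_eq] using ht
  have e0 : ∀ᶠ t in atBot, |σ t| ≤ η := by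
    have hmem : Metric.closedBall (0:ℝ) η ∈ nhds 0 := Metric.closedBall_mem_nhds _ hη
    filter_upwards [h0.eventually hmem] with t ht
    simpa [Metric.mem_closedBall, Real.dist_eq] using ht
  obtain ⟨M, hM⟩ := eventually_atTop.mp e1
  obtain ⟨m, hm⟩ := eventually_atBot.mp e0
  refine ⟨max M (max (-m) 1), lt_of_lt_of_le one_pos
    (le_trans (le_max_right _ _) (le_max_right _ _)), ?_, ?_⟩
  · intro s hs; exact hM s (le_trans (le_max_left _ _) hs)
  · intro s hs
    apply hm s
    have h1' : -m ≤ max M (max (-m) 1) := le_trans (le_max_left _ _) (le_max_right _ _)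
    linarith

set_option maxHeartbeats 1000000 in
lemma approx_1d {σ : ℝ → ℝ} (hc : Continuous σ)
    (h0 : Tendsto σ atBot (nhds 0)) (h1 : Tendsto σ atTop (nhds 1))
    (g : ℝ → ℝ) (hg : Continuous g) (a b : ℝ) {ε : ℝ} (hε : 0 < ε) :
    ∃ (n : ℕ) (c w v : Fin n → ℝ), ∀ t ∈ Set.Icc a b,
      |g t - ∑ i, c i * σ (w i * t + v i)| ≤ ε := by
  rcases lt_or_ge b a with hba | hab
  · exact ⟨0, Fin.elim0, Fin.elim0, Fin.elim0,
      fun t ht => absurd (le_trans ht.1 ht.2) (not_le.mpr hba)⟩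
  obtain ⟨B, hB1, hB⟩ := sig_bound hc h0 h1
  obtain ⟨b', hb'⟩ : ∃ b', b' = b + 1 := ⟨_, rfl⟩
  have hL : 1 ≤ b' - a := by rw [hb']; linarith
  obtain ⟨G0, hG0⟩ := (isCompact_Icc (a := a) (b := b')).exists_bound_of_continuousOn
    hg.continuousOn
  obtain ⟨G, hGdef⟩ : ∃ G, G = max G0 1 := ⟨_, rfl⟩
  have hG1 : (1:ℝ) ≤ G := by rw [hGdef]; exact le_max_right _ _
  have hG : ∀ s ∈ Set.Icc a b', |g s| ≤ G := fun s hs => by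
    rw [hGdef]
    exact le_trans (by simpa [Real.norm_eq_abs] using hG0 s hs) (le_max_left _ _)
  obtain ⟨ε', hε'def⟩ : ∃ e, e = ε / (4 * (B + 1)) := ⟨_, rfl⟩
  have hε' : 0 < ε' := by
    rw [hε'def]; exact div_pos hε (by linarith)
  -- uniform continuity
  have huc := (isCompact_Icc (a := a) (b := b')).uniformContinuousOn_of_continuous
    hg.continuousOn
  rw [Metric.uniformContinuousOn_iff_le] at huc
  obtain ⟨δ0, hδ0, hδ⟩ := huc ε' hε'
  obtain ⟨δ, hδdef⟩ : ∃ d, d = min δ0 1 := ⟨_, rfl⟩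
  have hδpos : 0 < δ := by rw [hδdef]; exact lt_min hδ0 one_pos
  have hδ1 : δ ≤ 1 := by rw [hδdef]; exact min_le_right _ _
  have hδδ0 : δ ≤ δ0 := by rw [hδdef]; exact min_le_left _ _
  obtain ⟨n, hn⟩ : ∃ n : ℕ, n = ⌈(b' - a) / δ⌉₊ + 1 := ⟨_, rfl⟩
  have hn1 : 1 ≤ n := by omega
  have hnpos : (0:ℝ) < n := by exact_mod_cast hn1
  have hnR : (b' - a) / δ ≤ (n:ℝ) := by
    rw [hn]
    refine le_trans (Nat.le_ceil _) ?_
    exact_mod_cast Nat.le_succ _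
  obtain ⟨h, hhdef⟩ : ∃ h, h = (b' - a) / n := ⟨_, rfl⟩
  have hh0 : 0 < h := by rw [hhdef]; exact div_pos (by linarith) hnpos
  have hnh : (n:ℝ) * h = b' - a := by
    rw [hhdef]; field_simp
  have hhδ : h ≤ δ := by
    rw [hhdef, div_le_iff₀ hnpos]
    have := (div_le_iff₀ hδpos).mp hnR
    linarith
  have hh1 : h ≤ 1 := le_trans hhδ hδ1
  obtain ⟨η, hηdef⟩ : ∃ e, e = ε' / (2 * G * (n + 1) + 1) := ⟨_, rfl⟩
  have hDpos : (0:ℝ) < 2 * G * ((n:ℝ) + 1) + 1 := by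
    have := mul_pos (show (0:ℝ) < 2*G by linarith) (show (0:ℝ) < (n:ℝ)+1 by linarith)
    linarith
  have hηpos : 0 < η := by rw [hηdef]; exact div_pos hε' hDpos
  obtain ⟨T, hT, hTtop, hTbot⟩ := sig_tail h0 h1 hηpos
  obtain ⟨k, hkdef⟩ : ∃ k, k = 4 * T / h := ⟨_, rfl⟩
  have hk : 0 < k := by rw [hkdef]; positivity
  have hkh : k * h = 4 * T := by rw [hkdef]; field_simp
  obtain ⟨Gf, hGf⟩ : ∃ Gf : ℕ → ℝ, Gf = fun j : ℕ => g (a + (j:ℝ) * h) := ⟨_, rfl⟩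
  obtain ⟨dd, hdd⟩ : ∃ dd : ℕ → ℝ,
    dd = fun j => if j = 0 then Gf 0 else Gf j - Gf (j - 1) := ⟨_, rfl⟩
  obtain ⟨cc, hcc⟩ : ∃ cc : ℕ → ℝ,
    cc = fun j : ℕ => if j = 0 then a - 1 else a + (j:ℝ) * h - h / 2 := ⟨_, rfl⟩
  have hdd0 : dd 0 = Gf 0 := by simp [hdd]
  have hddj : ∀ j : ℕ, j ≠ 0 → dd j = Gf j - Gf (j-1) := by
    intro j hj; simp [hdd, hj]
  have hcc0 : cc 0 = a - 1 := by simp [hcc]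
  have hccj : ∀ j : ℕ, j ≠ 0 → cc j = a + (j:ℝ)*h - h/2 := by
    intro j hj; simp [hcc, hj]
  have telesc : ∀ m : ℕ, ∑ j ∈ Finset.range (m + 1), dd j = Gf m := by
    intro m
    induction m with
    | zero => simpa using hdd0
    | succ p ih =>
      rw [Finset.sum_range_succ, ih, hddj (p+1) (Nat.succ_ne_zero p)]
      simp
  have hmemIcc : ∀ j : ℕ, j ≤ n → a + (j:ℝ) * h ∈ Set.Icc a b' := by
    intro j hj
    have hjn : (j:ℝ) ≤ n := by exact_mod_cast hj
    have hj0 : (0:ℝ) ≤ (j:ℝ) := Nat.cast_nonneg j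
    constructor
    · have := mul_nonneg hj0 hh0.le
      linarith
    · have := mul_le_mul_of_nonneg_right hjn hh0.le
      linarith
  have hjump : ∀ j : ℕ, 1 ≤ j → j ≤ n → |dd j| ≤ ε' := by
    intro j h1j hjn
    have e := hddj j (by omega)
    have hcast : ((j - 1 : ℕ) : ℝ) = (j:ℝ) - 1 := by
      rw [Nat.cast_sub h1j]; norm_num
    have hm1 : a + (j:ℝ) * h ∈ Set.Icc a b' := hmemIcc j hjn
    have hm2 : a + ((j-1:ℕ):ℝ) * h ∈ Set.Icc a b' := hmemIcc (j-1) (by omega)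
    have hdist : dist (a + (j:ℝ)*h) (a + ((j-1:ℕ):ℝ)*h) ≤ δ0 := by
      rw [Real.dist_eq, hcast]
      have e2 : a + (j:ℝ)*h - (a + ((j:ℝ)-1)*h) = h := by ring
      rw [e2, abs_of_pos hh0]
      linarith
    have hd := hδ _ hm1 _ hm2 hdist
    rw [Real.dist_eq] at hd
    rw [e, hGf]
    exact hd
  have hddG : ∀ j : ℕ, j ≤ n → |dd j| ≤ 2 * G := by
    intro j hjn
    by_cases hj0 : j = 0
    · subst hj0
      rw [hdd0, hGf]
      have h2' := hG _ (hmemIcc 0 (by omega))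
      push_cast at h2' ⊢
      linarith
    · rw [hddj j hj0]
      have hbb1 := hG _ (hmemIcc j hjn)
      have hbb2 := hG _ (hmemIcc (j-1) (by omega))
      rw [hGf]
      calc |g (a + (j:ℕ) * h) - g (a + (↑(j-1):ℝ) * h)|
          ≤ |g (a + (j:ℕ) * h)| + |g (a + (↑(j-1):ℝ) * h)| := abs_sub _ _
        _ ≤ 2 * G := by linarith
  refine ⟨n + 1, fun i => dd i, fun _ => k, fun i => -(k * cc i), ?_⟩
  intro t ht
  obtain ⟨hta, htb⟩ := ht
  have htb' : t ≤ b' := by rw [hb']; linarith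
  obtain ⟨x, hxdef⟩ : ∃ x, x = (t - a) / h := ⟨_, rfl⟩
  have hxh : t - a = x * h := by rw [hxdef]; field_simp
  have hx0 : 0 ≤ x := by rw [hxdef]; exact div_nonneg (by linarith) hh0.le
  have hxn : x ≤ n := by
    rw [hxdef, div_le_iff₀ hh0]
    linarith
  obtain ⟨js, hjs⟩ : ∃ js : ℕ, js = min n ⌊x + 1/2⌋₊ := ⟨_, rfl⟩
  have hjsn : js ≤ n := by rw [hjs]; exact min_le_left _ _
  have hjs1 : (js : ℝ) ≤ x + 1/2 := by
    have h1' : (js:ℝ) ≤ (⌊x + 1/2⌋₊ : ℝ) := by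
      rw [hjs]; exact_mod_cast min_le_right n _
    exact le_trans h1' (Nat.floor_le (by linarith))
  have hjs2 : x - 1/2 ≤ (js : ℝ) := by
    have hc1 : x - 1/2 ≤ (n:ℝ) := by linarith
    have hc2 : x + 1/2 < (⌊x + 1/2⌋₊ : ℝ) + 1 := Nat.lt_floor_add_one _
    have hc3 : x - 1/2 ≤ (⌊x + 1/2⌋₊:ℝ) := by linarith
    have hmin : ((min n ⌊x + 1/2⌋₊ : ℕ) : ℝ) = min (n:ℝ) ((⌊x+1/2⌋₊:ℕ):ℝ) := by
      exact_mod_cast Nat.cast_min n ⌊x + 1/2⌋₊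
    rw [hjs, hmin]
    exact le_min hc1 hc3
  -- rewrite the sum
  have hsum : ∑ i : Fin (n+1), dd i * σ (k * t + -(k * cc i))
      = ∑ j ∈ Finset.range (n+1), dd j * σ (k * (t - cc j)) := by
    rw [← Fin.sum_univ_eq_sum_range (fun j => dd j * σ (k * (t - cc j))) (n+1)]
    refine Finset.sum_congr rfl fun i _ => ?_
    have e : k * t + -(k * cc ↑i) = k * (t - cc ↑i) := by ring
    rw [e]
  have hideal : ∑ j ∈ Finset.range (n+1), (if j ≤ js then dd j else 0) = Gf js := by
    have hsub : Finset.range (js+1) ⊆ Finset.range (n+1) :=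
      Finset.range_subset_range.mpr (by omega)
    rw [← Finset.sum_subset hsub (fun j _ hj => if_neg (by
      simp only [Finset.mem_range] at hj; omega))]
    rw [← telesc js]
    refine Finset.sum_congr rfl fun j hj => if_pos ?_
    simp only [Finset.mem_range] at hj; omega
  have hdecomp : g t - ∑ j ∈ Finset.range (n+1), dd j * σ (k * (t - cc j))
      = (g t - Gf js) + ∑ j ∈ Finset.range (n+1),
          ((if j ≤ js then dd j else 0) - dd j * σ (k * (t - cc j))) := by
    rw [Finset.sum_sub_distrib, hideal]; ring
  -- part 1
  have hpart1 : |g t - Gf js| ≤ ε' := by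
    have hmem1 : t ∈ Set.Icc a b' := ⟨hta, htb'⟩
    have hmem2 : a + (js:ℝ) * h ∈ Set.Icc a b' := hmemIcc js hjsn
    have hxjs : |x - (js:ℝ)| ≤ 1/2 := abs_le.mpr ⟨by linarith, by linarith⟩
    have hdist : dist t (a + (js:ℝ) * h) ≤ δ0 := by
      rw [Real.dist_eq]
      have e : t - (a + (js:ℝ)*h) = (x - js) * h := by
        rw [sub_mul, ← hxh]; ring
      rw [e, abs_mul, abs_of_pos hh0]
      have := mul_le_mul_of_nonneg_right hxjs hh0.le
      linarith
    have hd := hδ _ hmem1 _ hmem2 hdist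
    rw [Real.dist_eq] at hd
    rw [hGf]
    exact hd
  -- per-term bound
  have hterm : ∀ j ∈ Finset.range (n+1),
      |(if j ≤ js then dd j else 0) - dd j * σ (k * (t - cc j))|
        ≤ 2*G*η + (if j = js ∨ j = js + 1 then ε' * (B+1) else 0) := by
    intro j hj
    rw [Finset.mem_range] at hj
    have hjn : j ≤ n := by omega
    have lhs_eq : (if j ≤ js then dd j else 0) - dd j * σ (k * (t - cc j))
        = dd j * ((if j ≤ js then (1:ℝ) else 0) - σ (k * (t - cc j))) := by
      split <;> ring
    rw [lhs_eq, abs_mul]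
    have hite_nonneg : (0:ℝ) ≤ if j = js ∨ j = js + 1 then ε' * (B+1) else 0 := by
      split
      · exact mul_nonneg hε'.le (by linarith)
      · exact le_rfl
    by_cases hj0 : j = 0
    · subst hj0
      have harg : T ≤ k * (t - cc 0) := by
        rw [hcc0]
        have h1' : 1 ≤ t - (a - 1) := by linarith
        have hkT : T ≤ k := by
          rw [hkdef, le_div_iff₀ hh0]
          have := mul_le_mul_of_nonneg_left hh1 hT.le
          linarith
        have := le_mul_of_one_le_right hk.le h1'
        linarith
      rw [if_pos (Nat.zero_le js)]
      have hσb : |1 - σ (k * (t - cc 0))| ≤ η := by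
        rw [abs_sub_comm]; exact hTtop _ harg
      have hd0 : |dd 0| ≤ 2*G := hddG 0 (by omega)
      have hmm : |dd 0| * |1 - σ (k * (t - cc 0))| ≤ 2*G*η :=
        mul_le_mul hd0 hσb (abs_nonneg _) (by linarith)
      linarith
    · have h1j : 1 ≤ j := by omega
      by_cases hnear : j = js ∨ j = js + 1
      · rw [if_pos hnear]
        have hb1' : |dd j| ≤ ε' := hjump j h1j hjn
        have hb2 : |(if j ≤ js then (1:ℝ) else 0) - σ (k * (t - cc j))| ≤ 1 + B := by
          refine le_trans (abs_sub _ _) ?_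
          have hi1 : |(if j ≤ js then (1:ℝ) else 0)| ≤ 1 := by
            split <;> simp
          have := hB (k * (t - cc j))
          linarith
        have hmm : |dd j| * |(if j ≤ js then (1:ℝ) else 0) - σ (k * (t - cc j))|
            ≤ ε' * (1 + B) := mul_le_mul hb1' hb2 (abs_nonneg _) hε'.le
        have h2Gη : (0:ℝ) ≤ 2*G*η := mul_nonneg (by linarith) hηpos.le
        linarith
      · rw [if_neg hnear]
        push_neg at hnear
        obtain ⟨hne1, hne2⟩ := hnear
        have hbd : |(if j ≤ js then (1:ℝ) else 0) - σ (k * (t - cc j))| ≤ η := by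
          have eccj : t - cc j = (x - j + 1/2) * h := by
            rw [hccj j hj0]
            have e3 : t - (a + (j:ℝ)*h - h/2) = (t - a) - (j:ℝ)*h + h/2 := by ring
            rw [e3, hxh]; ring
          by_cases hle : j ≤ js
          · have hjlt : j + 1 ≤ js := by omega
            have hjr : (j:ℝ) + 1 ≤ (js:ℝ) := by exact_mod_cast hjlt
            have hfac : 1 ≤ x - (j:ℝ) + 1/2 := by linarith
            have harg : T ≤ k * (t - cc j) := by
              rw [eccj]
              have e4 : k*((x - (j:ℝ) + 1/2)*h) = (x - (j:ℝ) + 1/2)*(4*T) := by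
                rw [← hkh]; ring
              have e5 : 4*T ≤ (x - (j:ℝ) + 1/2)*(4*T) :=
                le_mul_of_one_le_left (by linarith) hfac
              linarith [e4, e5]
            rw [if_pos hle, abs_sub_comm]
            exact hTtop _ harg
          · have hjge : js + 2 ≤ j := by omega
            have hjr : (js:ℝ) + 2 ≤ (j:ℝ) := by exact_mod_cast hjge
            have hfac : x - (j:ℝ) + 1/2 ≤ -1 := by linarith
            have harg : k * (t - cc j) ≤ -T := by
              rw [eccj]
              have e4 : k*((x - (j:ℝ) + 1/2)*h) = (x - (j:ℝ) + 1/2)*(4*T) := by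
                rw [← hkh]; ring
              have e5 : (x - (j:ℝ) + 1/2)*(4*T) ≤ (-1)*(4*T) :=
                mul_le_mul_of_nonneg_right hfac (by linarith)
              linarith [e4, e5]
            rw [if_neg hle]
            simpa using hTbot _ harg
        have hmm := mul_le_mul (hddG j hjn) hbd (abs_nonneg _) (by linarith)
        simpa using hmm
  -- sum the bounds
  have hsum2 : ∑ j ∈ Finset.range (n+1),
      |(if j ≤ js then dd j else 0) - dd j * σ (k * (t - cc j))|
      ≤ ∑ j ∈ Finset.range (n+1),
        (2*G*η + (if j = js ∨ j = js + 1 then ε' * (B+1) else 0)) :=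
    Finset.sum_le_sum hterm
  have hv0 : (0:ℝ) ≤ ε'*(B+1) := mul_nonneg hε'.le (by linarith)
  have hsum3 : ∑ j ∈ Finset.range (n+1),
      (2*G*η + (if j = js ∨ j = js + 1 then ε' * (B+1) else 0))
      ≤ ((n:ℝ)+1) * (2*G*η) + 2*(ε'*(B+1)) := by
    rw [Finset.sum_add_distrib, Finset.sum_const, Finset.card_range, nsmul_eq_mul]
    push_cast
    have hle : ∑ j ∈ Finset.range (n+1), (if j = js ∨ j = js + 1 then ε' * (B+1) else 0)
        ≤ ∑ j ∈ Finset.range (n+1),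
            ((if j = js then ε' * (B+1) else 0) + (if j = js+1 then ε' * (B+1) else 0)) := by
      refine Finset.sum_le_sum fun j _ => ?_
      by_cases e1 : j = js <;> by_cases e2 : j = js + 1 <;>
        simp [e1, e2] <;> linarith
    rw [Finset.sum_add_distrib, Finset.sum_ite_eq', Finset.sum_ite_eq'] at hle
    have h1' : (if js ∈ Finset.range (n+1) then ε' * (B+1) else 0) ≤ ε'*(B+1) := by
      split
      · exact le_rfl
      · exact hv0
    have h2' : (if js + 1 ∈ Finset.range (n+1) then ε' * (B+1) else 0) ≤ ε'*(B+1) := by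
      split
      · exact le_rfl
      · exact hv0
    linarith
  -- finish
  have hηsum : ((n:ℝ)+1) * (2*G*η) ≤ ε' := by
    have e : η * (2*G*((n:ℝ)+1) + 1) = ε' := by
      rw [hηdef]; field_simp
    linarith [e, hηpos.le]
  have hεeq : ε = 4*(B+1)*ε' := by
    have hBne : B + 1 ≠ 0 := by linarith
    rw [hε'def]; field_simp
  have habs : |g t - ∑ i : Fin (n+1), dd ↑i * σ (k * t + -(k * cc ↑i))|
      ≤ ε' + (((n:ℝ)+1) * (2*G*η) + 2*(ε'*(B+1))) := by
    rw [hsum, hdecomp]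
    refine le_trans (abs_add_le _ _) ?_
    have := le_trans (Finset.abs_sum_le_sum_abs _ _) (le_trans hsum2 hsum3)
    linarith
  refine le_trans habs ?_
  rw [hεeq]
  have hprod : (0:ℝ) ≤ ε' * B := mul_nonneg hε'.le (le_trans zero_le_one hB1)
  linarith [hηsum, hprod]

/-- Cybenko: the span of sigmoidal ridge functions is dense in
`C([0,1]^d)` (with the uniform topology, which is the topology of `C(K, ℝ)`
for `K` compact). -/
theorem cybenko_density
    (d : ℕ) (σ : ℝ → ℝ) (hσcont : Continuous σ)
    (h0 : Tendsto σ atBot (nhds 0)) (h1 : Tendsto σ atTop (nhds 1)) :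
    Dense ((Submodule.span ℝ
        {F : C(Set.Icc (0 : Fin d → ℝ) 1, ℝ) |
          ∃ (w : Fin d → ℝ) (b : ℝ),
            ∀ x : Set.Icc (0 : Fin d → ℝ) 1,
              F x = σ ((∑ i, w i * (x : Fin d → ℝ) i) + b)} :
        Submodule ℝ C(Set.Icc (0 : Fin d → ℝ) 1, ℝ)) :
      Set C(Set.Icc (0 : Fin d → ℝ) 1, ℝ)) := by
  haveI : CompactSpace (Set.Icc (0 : Fin d → ℝ) 1) :=
    isCompact_iff_compactSpace.mp isCompact_Icc
  set K := Set.Icc (0 : Fin d → ℝ) 1 with hK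
  set Sσ : Set C(K, ℝ) :=
    {F : C(K, ℝ) | ∃ (w : Fin d → ℝ) (b : ℝ),
      ∀ x : K, F x = σ ((∑ i, w i * (x : Fin d → ℝ) i) + b)} with hSσ
  set W : Submodule ℝ C(K,ℝ) := Submodule.span ℝ Sσ with hW
  -- continuity of linear functionals
  have hlin : ∀ w : Fin d → ℝ, Continuous (fun x : K => ∑ i, w i * (x : Fin d → ℝ) i) :=
    fun w => continuous_finset_sum _ fun i _ =>
      continuous_const.mul ((continuous_apply i).comp continuous_subtype_val)
  -- range of linear functional on the cube
  have hlinmem : ∀ (w : Fin d → ℝ) (x : K),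
      ∑ i, w i * (x : Fin d → ℝ) i ∈ Set.Icc (-(∑ i, |w i|)) (∑ i, |w i|) := by
    intro w x
    have hx : (x : Fin d → ℝ) ∈ Set.Icc (0 : Fin d → ℝ) 1 := x.2
    rw [Set.mem_Icc] at hx
    have habs : |∑ i, w i * (x : Fin d → ℝ) i| ≤ ∑ i, |w i| := by
      refine le_trans (Finset.abs_sum_le_sum_abs _ _) (Finset.sum_le_sum fun i _ => ?_)
      rw [abs_mul]
      have hx0 : (0:ℝ) ≤ (x : Fin d → ℝ) i := by
        have := hx.1 i
        simpa using this
      have hx1 : (x : Fin d → ℝ) i ≤ 1 := by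
        have := hx.2 i
        simpa using this
      have : |(x : Fin d → ℝ) i| ≤ 1 := by rw [abs_of_nonneg hx0]; exact hx1
      calc |w i| * |(x : Fin d → ℝ) i| ≤ |w i| * 1 :=
            mul_le_mul_of_nonneg_left this (abs_nonneg _)
        _ = |w i| := mul_one _
    rw [Set.mem_Icc]
    exact abs_le.mp habs
  -- ridge functions are in the closure of the span
  have hridge : ∀ (w : Fin d → ℝ) (g : ℝ → ℝ), Continuous g → ∀ F : C(K,ℝ),
      (∀ x : K, F x = g (∑ i, w i * (x : Fin d → ℝ) i)) →
      F ∈ closure (W : Set C(K,ℝ)) := by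
    intro w g hg F hF
    rw [Metric.mem_closure_iff]
    intro ε hε
    obtain ⟨n, c, aw, bw, happ⟩ :=
      approx_1d hσcont h0 h1 g hg (-(∑ i, |w i|)) (∑ i, |w i|) (half_pos hε)
    refine ⟨∑ i : Fin n, c i •
      (⟨fun x : K => σ (aw i * (∑ j, w j * (x : Fin d → ℝ) j) + bw i),
        hσcont.comp ((continuous_const.mul (hlin w)).add continuous_const)⟩ : C(K,ℝ)),
      ?_, ?_⟩
    · refine Submodule.sum_mem _ fun i _ => Submodule.smul_mem _ _ (Submodule.subset_span ?_)
      refine ⟨fun j => aw i * w j, bw i, fun x => ?_⟩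
      rw [ContinuousMap.coe_mk]
      congr 1
      rw [Finset.mul_sum]
      refine congrArg₂ _ ?_ rfl
      exact Finset.sum_congr rfl fun j _ => by simp [mul_assoc]
    · refine lt_of_le_of_lt ?_ (half_lt_self hε)
      rw [ContinuousMap.dist_le (le_of_lt (half_pos hε))]
      intro x
      have hx := happ (∑ j, w j * (x : Fin d → ℝ) j) (hlinmem w x)
      rw [Real.dist_eq, hF x]
      have heval : (∑ i : Fin n, c i •
          (⟨fun x : K => σ (aw i * (∑ j, w j * (x : Fin d → ℝ) j) + bw i),
            hσcont.comp ((continuous_const.mul (hlin w)).add continuous_const)⟩ : C(K,ℝ))) x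
          = ∑ i : Fin n, c i * σ (aw i * (∑ j, w j * (x : Fin d → ℝ) j) + bw i) := by
        rw [ContinuousMap.sum_apply]
        exact Finset.sum_congr rfl fun i _ => rfl
      rw [heval]
      exact hx
  -- the cosine ridge functions
  set Sc : Set C(K,ℝ) :=
    {F : C(K,ℝ) | ∃ (w : Fin d → ℝ) (b : ℝ),
      ∀ x : K, F x = Real.cos ((∑ i, w i * (x : Fin d → ℝ) i) + b)} with hSc
  have hScW : Sc ⊆ closure (W : Set C(K,ℝ)) := by
    rintro F ⟨w, b, hF⟩
    exact hridge w (fun t => Real.cos (t + b))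
      (Real.continuous_cos.comp (continuous_id.add continuous_const)) F (fun x => hF x)
  -- span of Sc is a subalgebra
  have hone : (1 : C(K,ℝ)) ∈ Submodule.span ℝ Sc := by
    refine Submodule.subset_span ⟨0, 0, fun x => ?_⟩
    simp
  have hmulSc : ∀ F ∈ Sc, ∀ F' ∈ Sc, F * F' ∈ Submodule.span ℝ Sc := by
    rintro F ⟨w, b, hF⟩ F' ⟨v, c, hF'⟩
    have hPQ : F * F' = (1/2 : ℝ) •
        (⟨fun x : K => Real.cos ((∑ i, (w + v) i * (x : Fin d → ℝ) i) + (b + c)),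
          Real.continuous_cos.comp ((hlin _).add continuous_const)⟩ : C(K,ℝ))
        + (1/2 : ℝ) •
        (⟨fun x : K => Real.cos ((∑ i, (w - v) i * (x : Fin d → ℝ) i) + (b - c)),
          Real.continuous_cos.comp ((hlin _).add continuous_const)⟩ : C(K,ℝ)) := by
      ext x
      simp only [ContinuousMap.mul_apply, ContinuousMap.add_apply, ContinuousMap.smul_apply,
        ContinuousMap.coe_mk, smul_eq_mul, hF x, hF' x]
      have e1 : ∑ i, (w + v) i * (x : Fin d → ℝ) i
          = (∑ i, w i * (x : Fin d → ℝ) i) + ∑ i, v i * (x : Fin d → ℝ) i := by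
        rw [← Finset.sum_add_distrib]
        exact Finset.sum_congr rfl fun i _ => by simp [add_mul]
      have e2 : ∑ i, (w - v) i * (x : Fin d → ℝ) i
          = (∑ i, w i * (x : Fin d → ℝ) i) - ∑ i, v i * (x : Fin d → ℝ) i := by
        rw [← Finset.sum_sub_distrib]
        exact Finset.sum_congr rfl fun i _ => by simp [sub_mul]
      rw [e1, e2]
      set A := (∑ i, w i * (x : Fin d → ℝ) i) + b with hA
      set C := (∑ i, v i * (x : Fin d → ℝ) i) + c with hC
      have eA : (∑ i, w i * (x : Fin d → ℝ) i) + (∑ i, v i * (x : Fin d → ℝ) i) + (b + c)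
          = A + C := by rw [hA, hC]; ring
      have eB : (∑ i, w i * (x : Fin d → ℝ) i) - (∑ i, v i * (x : Fin d → ℝ) i) + (b - c)
          = A - C := by rw [hA, hC]; ring
      rw [eA, eB]
      have h1' := Real.cos_add A C
      have h2' := Real.cos_sub A C
      linarith
    rw [hPQ]
    exact Submodule.add_mem _
      (Submodule.smul_mem _ _ (Submodule.subset_span ⟨w + v, b + c, fun x => rfl⟩))
      (Submodule.smul_mem _ _ (Submodule.subset_span ⟨w - v, b - c, fun x => rfl⟩))
  have hmul : ∀ x y : C(K,ℝ), x ∈ Submodule.span ℝ Sc → y ∈ Submodule.span ℝ Sc →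
      x * y ∈ Submodule.span ℝ Sc := by
    intro x y hx hy
    have hxy : x * y ∈ Submodule.span ℝ Sc * Submodule.span ℝ Sc :=
      Submodule.mul_mem_mul hx hy
    rw [Submodule.span_mul_span] at hxy
    refine Submodule.span_le.mpr ?_ hxy
    rintro _ ⟨F, hF, F', hF', rfl⟩
    exact hmulSc F hF F' hF'
  set A : Subalgebra ℝ C(K,ℝ) := Submodule.toSubalgebra (Submodule.span ℝ Sc) hone hmul
    with hAdef
  have hsep : A.SeparatesPoints := by
    intro x y hxy
    have hxy' : (x : Fin d → ℝ) ≠ (y : Fin d → ℝ) := fun hcon => hxy (Subtype.ext hcon)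
    obtain ⟨i, hi⟩ := Function.ne_iff.mp hxy'
    obtain ⟨w0, hw0⟩ : ∃ w0 : Fin d → ℝ, w0 = fun j => if j = i then (1:ℝ) else 0 := ⟨_, rfl⟩
    have hsum : ∀ z : K, (∑ j, w0 j * (z : Fin d → ℝ) j) + 0 = (z : Fin d → ℝ) i := by
      intro z
      rw [add_zero, hw0]
      simp only [ite_mul, one_mul, zero_mul]
      exact (Finset.sum_ite_eq' Finset.univ i (fun j => (z : Fin d → ℝ) j)).trans
        (if_pos (Finset.mem_univ i))
    have hcont0 : Continuous fun z : K =>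
        Real.cos ((∑ j, w0 j * (z : Fin d → ℝ) j) + 0) :=
      Real.continuous_cos.comp ((hlin w0).add continuous_const)
    refine ⟨_, ⟨(⟨fun z : K => Real.cos ((∑ j, w0 j * (z : Fin d → ℝ) j) + 0),
      hcont0⟩ : C(K,ℝ)), ?_, rfl⟩, ?_⟩
    · exact Submodule.subset_span ⟨w0, 0, fun z => rfl⟩
    · have hmemz : ∀ z : K, (z : Fin d → ℝ) i ∈ Set.Icc (0:ℝ) Real.pi := by
        intro z
        have hz : (z : Fin d → ℝ) ∈ Set.Icc (0 : Fin d → ℝ) 1 := z.2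
        rw [Set.mem_Icc] at hz
        have hz0 : (0:ℝ) ≤ (z : Fin d → ℝ) i := by have := hz.1 i; simpa using this
        have hz1 : (z : Fin d → ℝ) i ≤ 1 := by have := hz.2 i; simpa using this
        exact ⟨hz0, le_trans hz1 (by linarith [Real.pi_gt_three])⟩
      simp only [ContinuousMap.coe_mk]
      rw [hsum x, hsum y]
      intro hcon
      exact hi (Real.injOn_cos (hmemz x) (hmemz y) hcon)
  have hSW : A.topologicalClosure = ⊤ :=
    ContinuousMap.subalgebra_topologicalClosure_eq_top_of_separatesPoints A hsep
  -- conclude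
  have hAc : closure ((Submodule.span ℝ Sc : Submodule ℝ C(K,ℝ)) : Set C(K,ℝ)) = Set.univ := by
    have hcoe : ((A.topologicalClosure : Subalgebra ℝ C(K,ℝ)) : Set C(K,ℝ))
        = closure ((A : Subalgebra ℝ C(K,ℝ)) : Set C(K,ℝ)) :=
      Subalgebra.topologicalClosure_coe A
    rw [hSW] at hcoe
    have : ((⊤ : Subalgebra ℝ C(K,ℝ)) : Set C(K,ℝ)) = Set.univ := by
      simp
    rw [this] at hcoe
    exact hcoe.symm
  have hspanle : ((Submodule.span ℝ Sc : Submodule ℝ C(K,ℝ)) : Set C(K,ℝ))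
      ⊆ closure (W : Set C(K,ℝ)) := by
    have hWc : Submodule.span ℝ Sc ≤ W.topologicalClosure := by
      rw [Submodule.span_le, Submodule.topologicalClosure_coe]
      exact hScW
    intro F hF
    have h2 : F ∈ (W.topologicalClosure : Set C(K,ℝ)) := hWc hF
    rwa [Submodule.topologicalClosure_coe] at h2
  rw [dense_iff_closure_eq]
  apply Set.eq_univ_of_univ_subset
  calc Set.univ = closure ((Submodule.span ℝ Sc : Submodule ℝ C(K,ℝ)) : Set C(K,ℝ)) :=
        hAc.symm
    _ ⊆ closure (closure (W : Set C(K,ℝ))) := closure_mono hspanle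
    _ = closure (W : Set C(K,ℝ)) := closure_closure
end

section
/- Let σ : ℝ → ℝ be a polynomial. Then the set of functions of the form x ↦ Σ_{j=1}^m a_j σ(w_jᵀ x + b_j), with m ∈ ℕ, a_j, b_j ∈ ℝ, w_j ∈ ℝ^d, is not dense in C([0,1]^d) with respect to the uniform norm (for any d ≥ 1). -/
set_option synthInstance.maxHeartbeats 800000 in
/-- one-hidden-layer networks with a polynomial activation are
not dense in `C([0,1]^d)` for any `d ≥ 1`. -/
theorem polynomial_activation_not_dense
    (d : ℕ) (hd : 1 ≤ d) (σ : ℝ → ℝ)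
    (hσ : ∃ P : Polynomial ℝ, ∀ t : ℝ, σ t = P.eval t) :
    ¬ Dense
      {F : C(Set.Icc (0 : Fin d → ℝ) 1, ℝ) |
        ∃ (m : ℕ) (a : Fin m → ℝ) (w : Fin m → Fin d → ℝ) (b : Fin m → ℝ),
          ∀ x : Set.Icc (0 : Fin d → ℝ) 1,
            F x = ∑ j, a j * σ ((∑ i, w j i * (x : Fin d → ℝ) i) + b j)} := by
  obtain ⟨P, hP⟩ := hσ
  intro hdense
  set n := P.natDegree with hn
  -- nodes
  set t : Fin (n + 2) → ℝ := fun k => (k : ℝ) / (n + 1) with ht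
  have hpos : (0:ℝ) < n + 1 := by positivity
  have htinj : Function.Injective t := by
    intro j k h
    have : (j : ℝ) = k := by
      have h' : (j:ℝ) / (n + 1) = (k:ℝ) / (n + 1) := h; exact (div_left_inj' hpos.ne').mp h'
    exact Fin.ext (by exact_mod_cast this)
  have htmem : ∀ k, t k ∈ Set.Icc (0:ℝ) 1 := by
    intro k
    constructor
    · positivity
    · rw [div_le_one hpos]
      have : (k : ℕ) < n + 2 := k.isLt
      push_cast
      exact_mod_cast by exact_mod_cast Nat.lt_succ_iff.mp this
  -- curve points
  have hγmem : ∀ k, (fun _ : Fin d => t k) ∈ Set.Icc (0 : Fin d → ℝ) 1 := by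
    intro k
    refine ⟨fun i => (htmem k).1, fun i => (htmem k).2⟩
  let γ : Fin (n + 2) → (Set.Icc (0 : Fin d → ℝ) 1) := fun k => ⟨fun _ => t k, hγmem k⟩
  let E : C(Set.Icc (0 : Fin d → ℝ) 1, ℝ) → (Fin (n + 2) → ℝ) := fun F k => F (γ k)
  have hEcont : Continuous E :=
    continuous_pi fun k => continuous_eval_const (γ k)
  have hEsurj : Function.Surjective E := by
    intro v
    refine ⟨⟨fun x => (Lagrange.interpolate Finset.univ t v).eval ((x : Fin d → ℝ) ⟨0, hd⟩), ?_⟩, ?_⟩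
    · exact (Polynomial.continuous _).comp ((continuous_apply _).comp continuous_subtype_val)
    · funext k
      simp only [E, ContinuousMap.coe_mk, γ]
      exact Lagrange.eval_interpolate_at_node _ htinj.injOn (Finset.mem_univ k)
  -- linear evaluation map and subspace
  let L : Polynomial ℝ →ₗ[ℝ] (Fin (n + 2) → ℝ) := LinearMap.pi fun k => Polynomial.leval (t k)
  let V : Submodule ℝ (Fin (n + 2) → ℝ) := Submodule.map L (Polynomial.degreeLT ℝ (n + 1))
  have hVclosed : IsClosed (V : Set (Fin (n + 2) → ℝ)) := Submodule.closed_of_finiteDimensional V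
  -- image of the set lies in V
  have hES : E '' {F : C(Set.Icc (0 : Fin d → ℝ) 1, ℝ) |
      ∃ (m : ℕ) (a : Fin m → ℝ) (w : Fin m → Fin d → ℝ) (b : Fin m → ℝ),
        ∀ x : Set.Icc (0 : Fin d → ℝ) 1,
          F x = ∑ j, a j * σ ((∑ i, w j i * (x : Fin d → ℝ) i) + b j)} ⊆ (V : Set _) := by
    rintro _ ⟨F, ⟨m, a, w, b, hF⟩, rfl⟩
    set Q : Polynomial ℝ := ∑ j, Polynomial.C (a j) *
      (P.comp (Polynomial.C (∑ i, w j i) * Polynomial.X + Polynomial.C (b j))) with hQ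
    refine ⟨Q, ?_, ?_⟩
    · rw [SetLike.mem_coe, Polynomial.mem_degreeLT]
      have hdeg : Q.natDegree ≤ n := by
        refine (Polynomial.natDegree_sum_le _ _).trans ?_
        rw [Finset.fold_max_le]
        refine ⟨Nat.zero_le n, fun j _ => ?_⟩
        refine (Polynomial.natDegree_C_mul_le _ _).trans ?_
        refine (Polynomial.natDegree_comp_le).trans ?_
        have h1 : (Polynomial.C (∑ i, w j i) * Polynomial.X +
            Polynomial.C (b j)).natDegree ≤ 1 := by
          refine (Polynomial.natDegree_add_le _ _).trans ?_
          simp only [Polynomial.natDegree_C, max_le_iff]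
          exact ⟨(Polynomial.natDegree_C_mul_le _ _).trans (by simp), Nat.zero_le 1⟩
        calc P.natDegree * _ ≤ P.natDegree * 1 := Nat.mul_le_mul_left _ h1
          _ = n := by rw [mul_one]
      calc Q.degree ≤ (n : WithBot ℕ) := Polynomial.natDegree_le_iff_degree_le.mp hdeg
        _ < ((n + 1 : ℕ) : WithBot ℕ) := by exact_mod_cast Nat.lt_succ_self n
    · funext k
      have : (L Q) k = Q.eval (t k) := rfl
      rw [this, hQ]
      simp only [Polynomial.eval_finset_sum, Polynomial.eval_mul, Polynomial.eval_C,
        Polynomial.eval_comp, Polynomial.eval_add, Polynomial.eval_X]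
      have := hF (γ k)
      rw [show (E F) k = F (γ k) from rfl, this]
      refine Finset.sum_congr rfl fun j _ => ?_
      rw [hP]
      simp only [γ]
      rw [← Finset.sum_mul]
  -- density transfer
  have hall : ∀ x : Fin (n + 2) → ℝ, x ∈ V := by
    intro x
    obtain ⟨F, rfl⟩ := hEsurj x
    have hx : E F ∈ closure (E '' {F : C(Set.Icc (0 : Fin d → ℝ) 1, ℝ) |
        ∃ (m : ℕ) (a : Fin m → ℝ) (w : Fin m → Fin d → ℝ) (b : Fin m → ℝ),
          ∀ x : Set.Icc (0 : Fin d → ℝ) 1,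
            F x = ∑ j, a j * σ ((∑ i, w j i * (x : Fin d → ℝ) i) + b j)}) :=
      image_closure_subset_closure_image hEcont
        ⟨F, by rw [hdense.closure_eq]; trivial, rfl⟩
    have := closure_mono hES hx
    rwa [hVclosed.closure_eq] at this
  have hδ : (Pi.single (Fin.last (n + 1)) (1:ℝ) : Fin (n + 2) → ℝ) ∈ V := hall _
  obtain ⟨Q, hQdeg, hQval⟩ := hδ
  have hQ0 : Q = 0 := by
    apply Polynomial.eq_zero_of_natDegree_lt_card_of_eval_eq_zero Q
      (f := fun k : Fin (n + 1) => t k.castSucc) (htinj.comp (Fin.castSucc_injective _))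
    · intro i
      have h := congrFun hQval i.castSucc
      have hne : i.castSucc ≠ Fin.last (n + 1) := Fin.castSucc_lt_last i |>.ne
      rw [Pi.single_eq_of_ne hne] at h
      exact h
    · rw [Fintype.card_fin]
      rcases eq_or_ne Q 0 with rfl | h0
      · simpa using Nat.succ_pos n
      · exact (Polynomial.natDegree_lt_iff_degree_lt h0).mpr
          (by exact_mod_cast Polynomial.mem_degreeLT.mp hQdeg)
  have h1 := congrFun hQval (Fin.last (n + 1))
  rw [hQ0, Pi.single_eq_same] at h1
  simp at h1
end

section
/- For each k ≥ 1, the k-fold composition τ^[k] of the tent function restricted to [0,1] is piecewise affine with exactly 2^k affine pieces, and it attains the value 1/2 at exactly 2^k points of [0,1]; consequently the crossing number of τ^[k] (the minimal number of intervals partitioning ℝ on which x ↦ 𝟙(τ^[k](x) ≥ 1/2) is constant) equals 2^k + 1. -/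
/-- The tent function. -/
noncomputable def tent (x : ℝ) : ℝ :=
  if x ∈ Set.Icc (0 : ℝ) (1 / 2) then 2 * x
  else if x ∈ Set.Ioc (1 / 2 : ℝ) 1 then 2 * (1 - x)
  else 0

/-- `f` is piecewise affine on `[0,1]` with (at most) `n` pieces: there is a
subdivision `0 = t 0 < t 1 < ⋯ < t n = 1` such that `f` is affine on each
subinterval. -/
def PiecewiseAffineOnUnit (f : ℝ → ℝ) (n : ℕ) : Prop :=
  ∃ t : Fin (n + 1) → ℝ, StrictMono t ∧ t 0 = 0 ∧ t (Fin.last n) = 1 ∧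
    ∀ i : Fin n, ∃ a b : ℝ, ∀ x ∈ Set.Icc (t i.castSucc) (t i.succ), f x = a * x + b

/-- `ℝ` can be partitioned into `n` intervals on each of which `𝟙(f ≥ 1/2)` is
constant. -/
def CrossingPartition (f : ℝ → ℝ) (n : ℕ) : Prop :=
  ∃ S : Fin n → Set ℝ, (∀ i, (S i).OrdConnected) ∧ (⋃ i, S i) = Set.univ ∧
    (Pairwise (Function.onFun Disjoint S)) ∧
    ∀ i, ∀ x ∈ S i, ∀ y ∈ S i, ((1 : ℝ) / 2 ≤ f x ↔ (1 : ℝ) / 2 ≤ f y)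

lemma tent_left {x : ℝ} (h0 : 0 ≤ x) (h1 : x ≤ 1/2) : tent x = 2*x := by
  unfold tent; rw [if_pos ⟨h0, h1⟩]

lemma tent_right {x : ℝ} (h0 : 1/2 ≤ x) (h1 : x ≤ 1) : tent x = 2*(1-x) := by
  unfold tent
  rcases eq_or_lt_of_le h0 with h | h
  · rw [if_pos ⟨by linarith, le_of_eq h.symm⟩]; rw [← h]; norm_num
  · rw [if_neg (by simp only [Set.mem_Icc]; intro hc; linarith [hc.2]),
      if_pos ⟨h, h1⟩]

lemma tent_out {x : ℝ} (h : x < 0 ∨ 1 < x) : tent x = 0 := by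
  unfold tent
  rcases h with h | h
  · rw [if_neg (by simp only [Set.mem_Icc]; intro hc; linarith [hc.1]),
      if_neg (by simp only [Set.mem_Ioc]; intro hc; linarith [hc.1])]
  · rw [if_neg (by simp only [Set.mem_Icc]; intro hc; linarith [hc.2]),
      if_neg (by simp only [Set.mem_Ioc]; intro hc; linarith [hc.2])]

lemma tent_zero : tent 0 = 0 := by rw [tent_left le_rfl (by norm_num)]; ring

lemma tent_iter_zero (m : ℕ) : tent^[m] 0 = 0 := by
  induction m with
  | zero => rfl
  | succ m ih => rw [Function.iterate_succ_apply, tent_zero, ih]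

lemma tent_iter_out (m : ℕ) {x : ℝ} (h : x < 0 ∨ 1 < x) : tent^[m+1] x = 0 := by
  rw [Function.iterate_succ_apply, tent_out h, tent_iter_zero]

lemma tent_iter_piece : ∀ (k j : ℕ), j < 2^k → ∀ x : ℝ, (j:ℝ)/2^k ≤ x → x ≤ ((j:ℝ)+1)/2^k →
    tent^[k] x = if Even j then 2^k * x - (j:ℝ) else ((j:ℝ)+1) - 2^k * x := by
  intro k
  induction k with
  | zero =>
    intro j hj x h1 h2
    interval_cases j
    simp
  | succ k ih =>
    intro j hj x h1 h2
    have hP : (0:ℝ) < 2^k := by positivity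
    have hP1 : (0:ℝ) < 2^(k+1) := by positivity
    have hP2 : (2:ℝ)^(k+1) = 2*2^k := by rw [pow_succ]; ring
    have hpow : 2^(k+1) = 2*2^k := by rw [pow_succ]; ring
    rw [Function.iterate_succ_apply]
    rw [div_le_iff₀ hP1] at h1
    rw [le_div_iff₀ hP1] at h2
    by_cases hc : j < 2^k
    · have hjR : (j:ℝ) + 1 ≤ 2^k := by exact_mod_cast hc
      have hx0 : 0 ≤ x := by nlinarith [Nat.cast_nonneg (α := ℝ) j]
      have hx2 : x ≤ 1/2 := by nlinarith
      rw [tent_left hx0 hx2]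
      rw [ih j hc (2*x) (by rw [div_le_iff₀ hP]; nlinarith) (by rw [le_div_iff₀ hP]; nlinarith)]
      split_ifs <;> rw [hP2] <;> ring
    · push_neg at hc
      have hcR : (2:ℝ)^k ≤ j := by exact_mod_cast hc
      have hjR : (j:ℝ) + 1 ≤ 2^(k+1) := by exact_mod_cast hj
      have hx1 : 1/2 ≤ x := by nlinarith
      have hx2 : x ≤ 1 := by nlinarith
      rw [tent_right hx1 hx2]
      set j' := 2^(k+1) - 1 - j with hj'
      have hj'lt : j' < 2^k := by omega
      have hcast : (j' : ℝ) = 2^(k+1) - 1 - (j:ℝ) := by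
        rw [hj', Nat.cast_sub (by omega), Nat.cast_sub Nat.one_le_two_pow]
        push_cast
        ring
      have hpar : Even j' ↔ ¬ Even j := by
        rw [Nat.even_iff, Nat.even_iff, hj']
        omega
      rw [ih j' hj'lt (2*(1-x)) (by rw [div_le_iff₀ hP, hcast]; nlinarith)
          (by rw [le_div_iff₀ hP, hcast]; nlinarith)]
      by_cases hej : Even j
      · rw [if_neg (by rw [hpar]; simp [hej]), if_pos hej, hcast, hP2]; ring
      · rw [if_pos (hpar.mpr hej), if_neg hej, hcast, hP2]; ring

lemma exists_piece (k : ℕ) {x : ℝ} (h0 : 0 ≤ x) (h1 : x ≤ 1) :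
    ∃ j : ℕ, j < 2^k ∧ (j:ℝ)/2^k ≤ x ∧ x ≤ ((j:ℝ)+1)/2^k := by
  have hP : (0:ℝ) < 2^k := by positivity
  have h2 : (1:ℕ) ≤ 2^k := Nat.one_le_two_pow
  rcases eq_or_lt_of_le h1 with h | h
  · refine ⟨2^k - 1, Nat.sub_lt (Nat.two_pow_pos k) one_pos, ?_, ?_⟩
    · push_cast [h2]
      rw [div_le_iff₀ hP, h]
      nlinarith
    · push_cast [h2]
      rw [le_div_iff₀ hP, h]
      nlinarith
  · set j : ℕ := ⌊(2:ℝ)^k * x⌋.toNat with hjdef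
    have hfl : (0:ℝ) ≤ 2^k * x := by positivity
    have h0' : (0:ℤ) ≤ ⌊(2:ℝ)^k * x⌋ := Int.floor_nonneg.2 hfl
    have hcastj : (j:ℝ) = (⌊(2:ℝ)^k * x⌋ : ℝ) := by
      rw [hjdef]
      exact_mod_cast congrArg (fun z : ℤ => (z : ℝ)) (Int.toNat_of_nonneg h0')
    have hlow : (j:ℝ) ≤ 2^k * x := hcastj ▸ Int.floor_le _
    have hup : 2^k * x < (j:ℝ) + 1 := by rw [hcastj]; exact Int.lt_floor_add_one _
    refine ⟨j, ?_, ?_, ?_⟩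
    · have : (j:ℝ) < 2^k := lt_of_le_of_lt hlow (by nlinarith)
      exact_mod_cast this
    · rw [div_le_iff₀ hP]; linarith
    · rw [le_div_iff₀ hP]; linarith
noncomputable def cpt (k j : ℕ) : ℝ := (2*(j:ℝ)+1)/2^(k+1)

lemma cpt_lt_cpt {k j j' : ℕ} (h : j < j') : cpt k j < cpt k j' := by
  unfold cpt
  have : (j:ℝ) < j' := by exact_mod_cast h
  gcongr

lemma cpt_lb (k j : ℕ) : (j:ℝ)/2^k ≤ cpt k j := by
  have hP : (0:ℝ) < 2^k := by positivity
  rw [cpt, pow_succ, div_le_div_iff₀ hP (by positivity)]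
  nlinarith

lemma cpt_ub (k j : ℕ) : cpt k j ≤ ((j:ℝ)+1)/2^k := by
  have hP : (0:ℝ) < 2^k := by positivity
  rw [cpt, pow_succ, div_le_div_iff₀ (by positivity) hP]
  nlinarith

open scoped Classical in
noncomputable def gfun (k j : ℕ) (x : ℝ) : ℕ :=
  if Even j then (if cpt k j ≤ x then 1 else 0) else (if cpt k j < x then 1 else 0)

lemma gfun_le_one {k j : ℕ} {x : ℝ} : gfun k j x ≤ 1 := by
  unfold gfun; split_ifs <;> omega

lemma gfun_one_of (k j : ℕ) {x : ℝ} (h : cpt k j < x) : gfun k j x = 1 := by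
  unfold gfun
  rcases em (Even j) with he | he
  · rw [if_pos he, if_pos (le_of_lt h)]
  · rw [if_neg he, if_pos h]

lemma gfun_even {k j : ℕ} {x : ℝ} (h : Even j) : gfun k j x = 1 ↔ cpt k j ≤ x := by
  unfold gfun; rw [if_pos h]; split_ifs with h1 <;> simp [h1]

lemma gfun_odd {k j : ℕ} {x : ℝ} (h : ¬ Even j) : gfun k j x = 1 ↔ cpt k j < x := by
  unfold gfun; rw [if_neg h]; split_ifs with h1 <;> simp [h1]

lemma gfun_mono {k j : ℕ} {x y : ℝ} (hxy : x ≤ y) : gfun k j x ≤ gfun k j y := by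
  unfold gfun
  rcases em (Even j) with he | he
  · rw [if_pos he, if_pos he]
    split_ifs with h1 h2 <;> first | omega | exact absurd (h1.trans hxy) h2
  · rw [if_neg he, if_neg he]
    split_ifs with h1 h2 <;> first | omega | exact absurd (h1.trans_le hxy) h2

lemma gfun_anti {k j j' : ℕ} {x : ℝ} (hjj : j ≤ j') : gfun k j' x ≤ gfun k j x := by
  rcases eq_or_lt_of_le hjj with rfl | hlt
  · exact le_rfl
  · have hc := cpt_lt_cpt (k := k) hlt
    by_cases h1 : gfun k j' x = 0
    · rw [h1]; omega
    · have h1' : gfun k j' x = 1 := by have := gfun_le_one (k := k) (j := j') (x := x); omega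
      have hx : cpt k j' ≤ x := by
        by_cases he : Even j'
        · exact (gfun_even he).1 h1'
        · exact le_of_lt ((gfun_odd he).1 h1')
      rw [h1', gfun_one_of k j (lt_of_lt_of_le hc hx)]

open scoped Classical in
noncomputable def idx (k : ℕ) (x : ℝ) : ℕ := ∑ j ∈ Finset.range (2^k), gfun k j x

lemma idx_mono {k : ℕ} {x y : ℝ} (hxy : x ≤ y) : idx k x ≤ idx k y :=
  Finset.sum_le_sum fun j _ => gfun_mono hxy

lemma idx_le (k : ℕ) (x : ℝ) : idx k x ≤ 2^k := by
  calc idx k x ≤ ∑ _j ∈ Finset.range (2^k), 1 := Finset.sum_le_sum fun j _ => gfun_le_one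
  _ = 2^k := by simp

lemma gfun_eq_one_iff {k j : ℕ} (x : ℝ) (hj : j < 2^k) : gfun k j x = 1 ↔ j < idx k x := by
  constructor
  · intro h
    have h1 : ∀ i ∈ Finset.range (j+1), 1 ≤ gfun k i x := by
      intro i hi
      have := gfun_anti (k := k) (x := x) (Nat.lt_succ_iff.1 (Finset.mem_range.1 hi))
      omega
    have h2 : j + 1 ≤ ∑ i ∈ Finset.range (j+1), gfun k i x := by
      calc j + 1 = ∑ _i ∈ Finset.range (j+1), 1 := by simp
      _ ≤ _ := Finset.sum_le_sum h1
    have h3 : ∑ i ∈ Finset.range (j+1), gfun k i x ≤ idx k x :=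
      Finset.sum_le_sum_of_subset (Finset.range_subset_range.2 hj)
    omega
  · intro h
    by_contra hne
    have h0 : gfun k j x = 0 := by have := gfun_le_one (k := k) (j := j) (x := x); omega
    have hle : idx k x ≤ ∑ i ∈ Finset.range (2^k), (if i < j then 1 else 0) := by
      apply Finset.sum_le_sum
      intro i _
      by_cases hij : i < j
      · simp [hij, gfun_le_one]
      · simp only [hij, if_false]
        have := gfun_anti (k := k) (x := x) (not_lt.1 hij)
        omega
    have hsum : ∑ i ∈ Finset.range (2^k), (if i < j then 1 else 0) = j := by
      rw [Finset.sum_boole]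
      have : (Finset.range (2^k)).filter (fun i => i < j) = Finset.range j := by
        ext a; simp only [Finset.mem_filter, Finset.mem_range]; omega
      rw [this, Finset.card_range]
      simp
    omega
lemma even_two_pow {k : ℕ} (hk : 1 ≤ k) : Even (2^k) :=
  (Nat.even_pow).2 ⟨even_two, by omega⟩

lemma half_le_iff (k : ℕ) (hk : 1 ≤ k) (x : ℝ) :
    1/2 ≤ tent^[k] x ↔ Odd (idx k x) := by
  have hP : (0:ℝ) < 2^k := by positivity
  have hP2 : (2:ℝ)^(k+1) = 2*2^k := by rw [pow_succ]; ring
  have hEvenN : Even (2^k) := even_two_pow hk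
  have hNe : 2^k % 2 = 0 := Nat.even_iff.1 hEvenN
  have htle : idx k x ≤ 2^k := idx_le k x
  have hodd : Odd (idx k x) → 1/2 ≤ tent^[k] x := by
    rintro ⟨s, hs⟩
    have hlt : 2*s+1 < 2^k := by
      have hne : idx k x ≠ 2^k := by
        intro h
        rw [h] at hs
        omega
      omega
    have hg1 : gfun k (2*s) x = 1 := (gfun_eq_one_iff x (by omega)).2 (by omega)
    have hg2 : gfun k (2*s+1) x ≠ 1 := fun h => by
      have := (gfun_eq_one_iff x hlt).1 h; omega
    have hx1 : cpt k (2*s) ≤ x := (gfun_even ⟨s, by ring⟩).1 hg1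
    have hx2 : ¬ (cpt k (2*s+1) < x) := fun h => hg2 (gfun_one_of _ _ h)
    push_neg at hx2
    have e1 : 2*(2*(s:ℝ))+1 ≤ x*(2*2^k) := by
      rw [cpt, hP2, div_le_iff₀ (by positivity)] at hx1
      push_cast at hx1
      linarith
    have e2 : x*(2*2^k) ≤ 2*(2*(s:ℝ)+1)+1 := by
      rw [cpt, hP2, le_div_iff₀ (by positivity)] at hx2
      push_cast at hx2
      linarith
    rcases le_or_gt x ((2*(s:ℝ)+1)/2^k) with hc | hc
    · rw [tent_iter_piece k (2*s) (by omega) x (by rw [div_le_iff₀ hP]; push_cast; linarith)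
        (by push_cast; linarith)]
      rw [if_pos ⟨s, by ring⟩]
      push_cast
      linarith
    · rw [tent_iter_piece k (2*s+1) hlt x (by push_cast; linarith)
        (by rw [le_div_iff₀ hP]; push_cast; linarith)]
      rw [if_neg (by simp [Nat.even_add_one, Nat.even_mul])]
      push_cast
      linarith
  have heven : Even (idx k x) → tent^[k] x < 1/2 := by
    intro hev
    rcases Nat.eq_zero_or_pos (idx k x) with h0 | hpos
    · have hg0 : gfun k 0 x ≠ 1 := fun h => by
        have := (gfun_eq_one_iff x (Nat.two_pow_pos k)).1 h; omega
      have hx0 : ¬ cpt k 0 ≤ x := fun h => hg0 ((gfun_even Even.zero).2 h)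
      push_neg at hx0
      have e1 : x*(2*2^k) < 1 := by
        rw [cpt, hP2, lt_div_iff₀ (by positivity)] at hx0
        push_cast at hx0
        linarith
      rcases lt_or_ge x 0 with hneg | hge
      · obtain ⟨k', rfl⟩ := Nat.exists_eq_succ_of_ne_zero (by omega : k ≠ 0)
        rw [tent_iter_out k' (Or.inl hneg)]
        norm_num
      · rw [tent_iter_piece k 0 (Nat.two_pow_pos k) x (by simpa using hge)
          (by rw [le_div_iff₀ hP]; push_cast; nlinarith)]
        rw [if_pos Even.zero]
        push_cast
        linarith
    · by_cases hN : idx k x = 2^k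
      · have hg1 : gfun k (2^k - 1) x = 1 := (gfun_eq_one_iff x (by omega)).2 (by omega)
        have hodd' : Odd (2^k - 1) := Nat.Even.sub_odd Nat.one_le_two_pow hEvenN odd_one
        have hx1 : cpt k (2^k - 1) < x := (gfun_odd (Nat.not_even_iff_odd.2 hodd')).1 hg1
        have hc1 : ((2^k - 1 : ℕ) : ℝ) = 2^k - 1 := by
          push_cast [Nat.one_le_two_pow]
          ring
        have e1 : 2*((2:ℝ)^k - 1)+1 < x*(2*2^k) := by
          rw [cpt, hP2, div_lt_iff₀ (by positivity), hc1] at hx1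
          linarith
        rcases le_or_gt x 1 with hle | hgt
        · rw [tent_iter_piece k (2^k - 1) (Nat.sub_lt (Nat.two_pow_pos k) one_pos) x
            (by rw [hc1, div_le_iff₀ hP]; linarith)
            (by rw [hc1, le_div_iff₀ hP]; nlinarith)]
          rw [if_neg (Nat.not_even_iff_odd.2 hodd'), hc1]
          linarith
        · obtain ⟨k', rfl⟩ := Nat.exists_eq_succ_of_ne_zero (by omega : k ≠ 0)
          rw [tent_iter_out k' (Or.inr hgt)]
          norm_num
      · obtain ⟨u, hu⟩ : ∃ u, idx k x = u + 1 := ⟨idx k x - 1, by omega⟩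
        have hu2 : u + 1 < 2^k := by omega
        have hgu : gfun k u x = 1 := (gfun_eq_one_iff x (by omega)).2 (by omega)
        have hgt' : gfun k (u+1) x ≠ 1 := fun h => by
          have := (gfun_eq_one_iff x hu2).1 h; omega
        have hevu1 : Even (u+1) := hu ▸ hev
        have hoddu : ¬ Even u := fun he => (Nat.even_add_one.1 hevu1) he
        have hx1 : cpt k u < x := (gfun_odd hoddu).1 hgu
        have hx2 : ¬ cpt k (u+1) ≤ x := fun h => hgt' ((gfun_even hevu1).2 h)
        push_neg at hx2
        have e1 : 2*(u:ℝ)+1 < x*(2*2^k) := by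
          rw [cpt, hP2, div_lt_iff₀ (by positivity)] at hx1
          push_cast at hx1
          linarith
        have e2 : x*(2*2^k) < 2*((u:ℝ)+1)+1 := by
          rw [cpt, hP2, lt_div_iff₀ (by positivity)] at hx2
          push_cast at hx2
          linarith
        rcases le_or_gt x (((u:ℝ)+1)/2^k) with hc | hc
        · rw [tent_iter_piece k u (by omega) x (by rw [div_le_iff₀ hP]; linarith) hc]
          rw [if_neg hoddu]
          linarith
        · rw [tent_iter_piece k (u+1) hu2 x (by push_cast; linarith)
            (by rw [le_div_iff₀ hP]; push_cast; linarith)]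
          rw [if_pos hevu1]
          push_cast
          linarith
  constructor
  · intro h
    rcases Nat.even_or_odd (idx k x) with he | ho
    · exact absurd h (not_le.2 (heven he))
    · exact ho
  · exact hodd

lemma val_at (k m : ℕ) (hk : 1 ≤ k) (hm : m ≤ 2^k) :
    (1/2 ≤ tent^[k] ((m:ℝ)/2^k) ↔ Odd m) := by
  have hP : (0:ℝ) < 2^k := by positivity
  have hEvenN : Even (2^k) := even_two_pow hk
  rcases Nat.lt_or_ge m (2^k) with hlt | hge
  · rw [tent_iter_piece k m hlt _ le_rfl (by gcongr; linarith)]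
    rcases Nat.even_or_odd m with he | ho
    · rw [if_pos he]
      have hz : (2:ℝ)^k * ((m:ℝ)/2^k) - m = 0 := by field_simp; ring
      rw [hz]
      norm_num
      exact he
    · rw [if_neg (Nat.not_even_iff_odd.2 ho)]
      have hz : (m:ℝ)+1 - 2^k*((m:ℝ)/2^k) = 1 := by field_simp; ring
      rw [hz]
      norm_num [ho]
  · have hmE : m = 2^k := le_antisymm hm hge
    subst hmE
    have hx : ((2^k : ℕ):ℝ)/2^k = 1 := by
      rw [div_eq_one_iff_eq (ne_of_gt hP)]
      push_cast
      ring
    have hodd' : Odd (2^k - 1) := Nat.Even.sub_odd Nat.one_le_two_pow hEvenN odd_one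
    have hc1 : ((2^k - 1:ℕ):ℝ) = 2^k - 1 := by
      push_cast [Nat.one_le_two_pow]
      ring
    rw [hx, tent_iter_piece k (2^k - 1) (Nat.sub_lt (Nat.two_pow_pos k) one_pos) 1
      (by rw [hc1, div_le_iff₀ hP]; linarith)
      (by rw [hc1, le_div_iff₀ hP]; linarith)]
    rw [if_neg (Nat.not_even_iff_odd.2 hodd'), hc1]
    have hz : ((2:ℝ)^k - 1) + 1 - 2^k*1 = 0 := by ring
    rw [hz]
    norm_num
    push_cast
    exact hEvenN
lemma part1 (k : ℕ) : PiecewiseAffineOnUnit (tent^[k]) (2^k) := by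
  have hP : (0:ℝ) < 2^k := by positivity
  refine ⟨fun i => (i.val : ℝ)/2^k, ?_, ?_, ?_, ?_⟩
  · intro i j hij
    have h : (i.val:ℝ) < j.val := by exact_mod_cast hij
    exact div_lt_div_of_pos_right h hP
  · simp
  · show ((Fin.last (2^k)).val : ℝ)/2^k = 1
    rw [Fin.val_last]
    push_cast
    rw [div_self (ne_of_gt hP)]
  · intro i
    refine ⟨if Even i.val then (2:ℝ)^k else -(2^k),
      if Even i.val then -(i.val:ℝ) else (i.val:ℝ)+1, ?_⟩
    intro x hx
    have hb1 : (i.val:ℝ)/2^k ≤ x := by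
      have := hx.1
      simpa [Fin.coe_castSucc] using this
    have hb2 : x ≤ ((i.val:ℝ)+1)/2^k := by
      have := hx.2
      simp only [Fin.val_succ] at this
      push_cast at this
      exact this
    rw [tent_iter_piece k i.val i.isLt x hb1 hb2]
    split_ifs <;> ring
lemma part3 (k : ℕ) : {x ∈ Set.Icc (0:ℝ) 1 | tent^[k] x = 1/2}.ncard = 2^k := by
  have hP : (0:ℝ) < 2^k := by positivity
  have hP1 : (0:ℝ) < 2^(k+1) := by positivity
  have hset : {x ∈ Set.Icc (0:ℝ) 1 | tent^[k] x = 1/2} = ↑((Finset.range (2^k)).image (cpt k)) := by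
    ext x
    simp only [Finset.coe_image, Set.mem_image, Finset.mem_coe, Finset.mem_range,
      Set.mem_setOf_eq, Set.mem_Icc]
    constructor
    · rintro ⟨⟨hx0, hx1⟩, hx⟩
      obtain ⟨j, hj, hb1, hb2⟩ := exists_piece k hx0 hx1
      refine ⟨j, hj, ?_⟩
      rw [tent_iter_piece k j hj x hb1 hb2] at hx
      split_ifs at hx with hpar
      · rw [cpt, div_eq_iff (ne_of_gt hP1), pow_succ]
        linarith
      · rw [cpt, div_eq_iff (ne_of_gt hP1), pow_succ]
        linarith
    · rintro ⟨j, hj, rfl⟩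
      have hjR : (j:ℝ)+1 ≤ 2^k := by exact_mod_cast hj
      refine ⟨⟨?_, ?_⟩, ?_⟩
      · rw [cpt]; positivity
      · rw [cpt, div_le_one hP1, pow_succ]; linarith
      · rw [tent_iter_piece k j hj _ (cpt_lb k j) (cpt_ub k j)]
        split_ifs with hpar
        · rw [cpt, pow_succ]
          field_simp
          ring
        · rw [cpt, pow_succ]
          field_simp
          ring
  rw [hset, Set.ncard_coe_finset, Finset.card_image_of_injOn, Finset.card_range]
  intro a _ b _ hab
  by_contra hne
  rcases Nat.lt_or_ge a b with h | h
  · exact absurd hab (ne_of_lt (cpt_lt_cpt h))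
  · have hba : b < a := by omega
    exact absurd hab.symm (ne_of_lt (cpt_lt_cpt hba))

lemma part4mem (k : ℕ) (hk : 1 ≤ k) : CrossingPartition (tent^[k]) (2^k + 1) := by
  refine ⟨fun i => {x : ℝ | idx k x = i.val}, ?_, ?_, ?_, ?_⟩
  · intro i
    constructor
    intro x hx y hy z hz
    simp only [Set.mem_setOf_eq] at hx hy ⊢
    exact le_antisymm (hy ▸ idx_mono hz.2) (hx ▸ idx_mono hz.1)
  · ext x
    simp only [Set.mem_iUnion, Set.mem_setOf_eq, Set.mem_univ, iff_true]
    exact ⟨⟨idx k x, by have := idx_le k x; omega⟩, rfl⟩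
  · intro i j hij
    simp only [Function.onFun]
    rw [Set.disjoint_left]
    intro x hx hx'
    simp only [Set.mem_setOf_eq] at hx hx'
    exact hij (Fin.ext (by rw [← hx, ← hx']))
  · intro i x hx y hy
    simp only [Set.mem_setOf_eq] at hx hy
    rw [half_le_iff k hk x, half_le_iff k hk y, hx, hy]

lemma part4low (k n : ℕ) (hk : 1 ≤ k) (h : CrossingPartition (tent^[k]) n) : 2^k + 1 ≤ n := by
  obtain ⟨S, hord, hcov, _hdis, hconst⟩ := h
  have hP : (0:ℝ) < 2^k := by positivity
  have hmono : ∀ a b : ℕ, a ≤ b → (a:ℝ)/2^k ≤ (b:ℝ)/2^k := by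
    intro a b hab
    gcongr
  have hchoose : ∀ m : ℕ, ∃ i : Fin n, ((m:ℝ)/2^k) ∈ S i := by
    intro m
    have hx : ((m:ℝ)/2^k) ∈ ⋃ i, S i := by rw [hcov]; trivial
    exact Set.mem_iUnion.1 hx
  set χ : ℕ → Fin n := fun m => Classical.choose (hchoose m) with hχdef
  have hχ : ∀ m, ((m:ℝ)/2^k) ∈ S (χ m) := fun m => Classical.choose_spec (hchoose m)
  have key2 : ∀ m m', m < m' → m' ≤ 2^k → χ m ≠ χ m' := by
    intro m m' hmm' hm' heq
    have hmem : ((m+1:ℕ):ℝ)/2^k ∈ S (χ m) := by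
      apply (hord (χ m)).out (hχ m) (heq ▸ hχ m')
      exact ⟨hmono m (m+1) (by omega), hmono (m+1) m' (by omega)⟩
    have hval := hconst (χ m) _ (hχ m) _ hmem
    rw [val_at k m hk (by omega), val_at k (m+1) hk (by omega)] at hval
    rw [Nat.odd_iff, Nat.odd_iff] at hval
    omega
  have hinj : Set.InjOn χ ↑(Finset.range (2^k + 1)) := by
    intro a ha b hb hab
    simp only [Finset.coe_range, Set.mem_Iio] at ha hb
    rcases lt_trichotomy a b with h | h | h
    · exact absurd hab (key2 a b h (by omega))
    · exact h
    · exact absurd hab.symm (key2 b a h (by omega))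
  have hcard := Finset.card_le_card_of_injOn χ (fun a _ => Finset.mem_univ _) hinj
  simpa using hcard
lemma part2 (k n : ℕ) (hn : n < 2^k) : ¬ PiecewiseAffineOnUnit (tent^[k]) n := by
  rintro ⟨t, hmono, h0, h1, haff⟩
  have hP : (0:ℝ) < 2^k := by positivity
  rcases Nat.eq_zero_or_pos n with rfl | hn1
  · have hbad : (0:ℝ) = 1 := by rw [← h0, ← h1]; rfl
    norm_num at hbad
  have claim : ∀ m : ℕ, m ≤ 2^k → ∃ i : Fin (n+1), t i = (m:ℝ)/2^k := by
    intro m hm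
    by_contra hcon
    push_neg at hcon
    have hm0 : m ≠ 0 := by
      rintro rfl
      exact hcon 0 (by rw [h0]; simp)
    have hmN : m ≠ 2^k := by
      rintro rfl
      refine hcon (Fin.last n) ?_
      rw [h1, eq_comm, div_eq_one_iff_eq (ne_of_gt hP)]
      push_cast
      ring
    obtain ⟨j, rfl⟩ : ∃ j, m = j + 1 := ⟨m-1, by omega⟩
    have hjlt : j + 1 < 2^k := by omega
    set e : ℝ := ((j:ℝ)+1)/2^k with he
    have hee : ((j+1:ℕ):ℝ)/2^k = e := by rw [he]; push_cast; ring
    have he0 : 0 < e := by rw [he]; positivity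
    have he1 : e < 1 := by
      rw [he, div_lt_one hP]
      have : ((j:ℝ)+1) < 2^k := by exact_mod_cast hjlt
      linarith
    set F := Finset.univ.filter (fun i : Fin (n+1) => t i < e) with hF
    have hne : F.Nonempty := ⟨0, by simp [hF, h0, he0]⟩
    set i₀ := F.max' hne with hi₀def
    have hi₀ : t i₀ < e := (Finset.mem_filter.1 (F.max'_mem hne)).2
    have hlast : i₀ ≠ Fin.last n := by
      intro h
      rw [h, h1] at hi₀
      linarith
    have hi₀lt : (i₀ : ℕ) < n := Fin.val_lt_last hlast
    set i : Fin n := ⟨i₀.val, hi₀lt⟩ with hidef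
    have hcs : i.castSucc = i₀ := rfl
    have hsval : (i.succ : ℕ) = i₀.val + 1 := rfl
    have hsucc : e < t i.succ := by
      have hle : e ≤ t i.succ := by
        by_contra hcon2
        push_neg at hcon2
        have hmem : i.succ ∈ F := Finset.mem_filter.2 ⟨Finset.mem_univ _, hcon2⟩
        have hle2 := F.le_max' _ hmem
        rw [← hi₀def] at hle2
        rw [Fin.le_def, hsval] at hle2
        omega
      exact lt_of_le_of_ne hle (fun hh => hcon i.succ (hee.trans hh).symm)
    obtain ⟨a, b, hab⟩ := haff i
    rw [hcs] at hab
    set δ : ℝ := min (min (e - t i₀) (t i.succ - e)) (1/2^k) with hδdef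
    have hδpos : 0 < δ := lt_min (lt_min (by linarith) (by linarith)) (by positivity)
    have hδ1 : δ ≤ e - t i₀ := le_trans (min_le_left _ _) (min_le_left _ _)
    have hδ2 : δ ≤ t i.succ - e := le_trans (min_le_left _ _) (min_le_right _ _)
    have hδ3 : δ ≤ 1/2^k := min_le_right _ _
    have hae : tent^[k] e = a*e+b := hab e ⟨le_of_lt hi₀, le_of_lt hsucc⟩
    have ham : tent^[k] (e-δ) = a*(e-δ)+b := hab _ ⟨by linarith, by linarith⟩
    have hap : tent^[k] (e+δ) = a*(e+δ)+b := hab _ ⟨by linarith, by linarith⟩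
    have hsum : tent^[k] (e-δ) + tent^[k] (e+δ) = 2 * tent^[k] e := by
      rw [hae, ham, hap]; ring
    have h2ke : 2^k * e = (j:ℝ)+1 := by rw [he]; field_simp
    have hposδ : (0:ℝ) < 2^k*δ := by positivity
    have hstep : ((((j+1:ℕ)):ℝ)+1)/2^k = e + 1/2^k := by rw [he]; push_cast; ring
    have hjlb : ((j:ℕ):ℝ)/2^k = e - 1/2^k := by rw [he]; push_cast; ring
    rcases Nat.even_or_odd j with hev | hod
    · have hpar : ¬ Even (j+1) := by simp [Nat.even_add_one, hev]
      have hA : tent^[k] e = ((j:ℝ)+1)+1 - 2^k*e := by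
        rw [tent_iter_piece k (j+1) hjlt e (le_of_eq hee) (by rw [hstep]; linarith [one_div_pos.mpr hP]),
          if_neg hpar]
        push_cast
        ring
      have hB : tent^[k] (e+δ) = ((j:ℝ)+1)+1 - 2^k*(e+δ) := by
        rw [tent_iter_piece k (j+1) hjlt (e+δ) (by rw [hee]; linarith) (by rw [hstep]; linarith),
          if_neg hpar]
        push_cast
        ring
      have hC : tent^[k] (e-δ) = 2^k*(e-δ) - (j:ℝ) := by
        rw [tent_iter_piece k j (by omega) (e-δ) (by rw [hjlb]; linarith) (by rw [← he]; linarith),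
          if_pos hev]
      rw [hA, hB, hC] at hsum
      linarith
    · have hpar : Even (j+1) := Nat.even_add_one.2 (Nat.not_even_iff_odd.2 hod)
      have hA : tent^[k] e = 2^k*e - ((j:ℝ)+1) := by
        rw [tent_iter_piece k (j+1) hjlt e (le_of_eq hee) (by rw [hstep]; linarith [one_div_pos.mpr hP]),
          if_pos hpar]
        push_cast
        ring
      have hB : tent^[k] (e+δ) = 2^k*(e+δ) - ((j:ℝ)+1) := by
        rw [tent_iter_piece k (j+1) hjlt (e+δ) (by rw [hee]; linarith) (by rw [hstep]; linarith),
          if_pos hpar]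
        push_cast
        ring
      have hC : tent^[k] (e-δ) = ((j:ℝ)+1) - 2^k*(e-δ) := by
        rw [tent_iter_piece k j (by omega) (e-δ) (by rw [hjlb]; linarith) (by rw [← he]; linarith),
          if_neg (Nat.not_even_iff_odd.2 hod)]
      rw [hA, hB, hC] at hsum
      linarith
  classical
  set ι : ℕ → Fin (n+1) := fun m => if h : m ≤ 2^k then Classical.choose (claim m h) else 0
    with hιdef
  have hι : ∀ m (hm : m ≤ 2^k), t (ι m) = (m:ℝ)/2^k := by
    intro m hm
    rw [hιdef]
    simp only [dif_pos hm]
    exact Classical.choose_spec (claim m hm)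
  have hinj : Set.InjOn ι ↑(Finset.range (2^k+1)) := by
    intro a ha b hb hab
    simp only [Finset.coe_range, Set.mem_Iio] at ha hb
    have h1 := hι a (by omega)
    have h2 := hι b (by omega)
    rw [hab, h2] at h1
    field_simp at h1
    exact_mod_cast h1.symm
  have hcard := Finset.card_le_card_of_injOn ι (fun a _ => Finset.mem_univ _) hinj
  simp only [Finset.card_range, Finset.card_univ, Fintype.card_fin] at hcard
  omega

/-- `τ^[k]` is piecewise affine on `[0,1]` with exactly `2^k` pieces,
attains the value `1/2` at exactly `2^k` points of `[0,1]`, and its crossing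
number is `2^k + 1`. -/
theorem tent_iterate_crossing_number (k : ℕ) (hk : 1 ≤ k) :
    PiecewiseAffineOnUnit (tent^[k]) (2 ^ k) ∧
    (∀ n < 2 ^ k, ¬ PiecewiseAffineOnUnit (tent^[k]) n) ∧
    ({x ∈ Set.Icc (0 : ℝ) 1 | tent^[k] x = 1 / 2}.ncard = 2 ^ k) ∧
    IsLeast {n : ℕ | CrossingPartition (tent^[k]) n} (2 ^ k + 1) :=
  ⟨part1 k, fun n hn => part2 k n hn, part3 k,
    part4mem k hk, fun _n hn => part4low k _ hk hn⟩
end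

section
/- Let d_x, d_y ≥ 1 and let K ⊂ ℝ^{d_x} be a compact set with nonempty interior. If m ≤ d_x, then the class of arbitrary-depth width-m Leaky-ReLU networks from ℝ^{d_x} to ℝ^{d_y} is NOT dense in C(K; ℝ^{d_y}) with respect to the uniform norm. (Necessity direction of the minimum-width theorem, weak form: width at least d_x + 1 is necessary.) -/
/-- The Leaky-ReLU activation with parameter `α`. -/
noncomputable def leakyReLU (α : ℝ) (x : ℝ) : ℝ := if 0 < x then x else α * x

/-- Arbitrary-depth Leaky-ReLU networks from `ℝ^dx` in which every hidden layer
(i.e. every layer to which the activation is applied) has at most `m` neurons. -/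
inductive IsLeakyNet (α : ℝ) (m dx : ℕ) :
    {k : ℕ} → ((Fin dx → ℝ) → (Fin k → ℝ)) → Prop
  | affine {k : ℕ} (A : Matrix (Fin k) (Fin dx) ℝ) (b : Fin k → ℝ) :
      IsLeakyNet α m dx (fun x => A.mulVec x + b)
  | step {k l : ℕ} (f : (Fin dx → ℝ) → (Fin k → ℝ)) (hf : IsLeakyNet α m dx f)
      (hk : k ≤ m) (A : Matrix (Fin l) (Fin k) ℝ) (b : Fin l → ℝ) :
      IsLeakyNet α m dx (fun x => A.mulVec (fun i => leakyReLU α (f x i)) + b)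

lemma leakyReLU_eq (α x : ℝ) : leakyReLU α x = x + (α - 1) * min x 0 := by
  unfold leakyReLU
  split_ifs with h
  · rw [min_eq_right h.le]; ring
  · push_neg at h
    rw [min_eq_left h]; ring

lemma continuous_leakyReLU (α : ℝ) : Continuous (leakyReLU α) := by
  have : leakyReLU α = fun x => x + (α - 1) * min x 0 := funext (leakyReLU_eq α)
  rw [this]
  fun_prop

lemma leakyReLU_inv (α : ℝ) (hα : 0 < α) (x : ℝ) :
    leakyReLU α⁻¹ (leakyReLU α x) = x := by
  unfold leakyReLU
  by_cases hx : 0 < x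
  · simp [hx]
  · rw [if_neg hx]
    have hx' : x ≤ 0 := not_lt.mp hx
    have h2 : ¬ 0 < α * x := not_lt.mpr (mul_nonpos_of_nonneg_of_nonpos hα.le hx')
    rw [if_neg h2, ← mul_assoc, inv_mul_cancel₀ (ne_of_gt hα), one_mul]

/-- Leaky-ReLU as a homeomorphism of `ℝ`. -/
noncomputable def leakyHomeo (α : ℝ) (hα : 0 < α) : ℝ ≃ₜ ℝ where
  toFun := leakyReLU α
  invFun := leakyReLU α⁻¹
  left_inv := leakyReLU_inv α hα
  right_inv := by
    intro x
    have := leakyReLU_inv α⁻¹ (inv_pos.mpr hα) x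
    rwa [inv_inv] at this
  continuous_toFun := continuous_leakyReLU α
  continuous_invFun := continuous_leakyReLU α⁻¹

/-- Structural invariant of width-`≤ dx` leaky nets: either affine after a
homeomorphism of `ℝ^dx`, or constant along a nontrivial curve family. -/
def LeakyInv (dx k : ℕ) (F : (Fin dx → ℝ) → (Fin k → ℝ)) : Prop :=
  (∃ ψ : (Fin dx → ℝ) ≃ₜ (Fin dx → ℝ), ∃ A : Matrix (Fin k) (Fin dx) ℝ,
      ∃ b : Fin k → ℝ, ∀ x, F x = A.mulVec (ψ x) + b) ∨
  (∃ ψ : (Fin dx → ℝ) ≃ₜ (Fin dx → ℝ), ∃ u : Fin dx → ℝ, u ≠ 0 ∧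
      ∀ (x : Fin dx → ℝ) (t : ℝ), F (ψ.symm (ψ x + t • u)) = F x)

lemma leakyInv_of_net {α : ℝ} (hα : 0 < α) {m dx k : ℕ} (hm : m ≤ dx)
    {F : (Fin dx → ℝ) → (Fin k → ℝ)} (hF : IsLeakyNet α m dx F) :
    LeakyInv dx k F := by
  induction hF with
  | affine A b =>
      exact Or.inl ⟨Homeomorph.refl _, A, b, fun x => rfl⟩
  | @step k l f hf hk A b ih =>
      rcases ih with ⟨ψ, A0, b0, hfeq⟩ | ⟨ψ, u, hu, hinv⟩
      · by_cases hinj : Function.Injective (Matrix.mulVecLin A0)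
        -- injective: forces k = dx and A0 invertible
        ·
          have hdim : dx ≤ k := by
            have := LinearMap.finrank_le_finrank_of_injective hinj
            simpa using this
          have hkdx : k = dx := le_antisymm (hk.trans hm) hdim
          subst hkdx
          have hbij : Function.Bijective (Matrix.mulVecLin A0) :=
            ⟨hinj, (LinearMap.injective_iff_surjective).mp hinj⟩
          let eL : (Fin k → ℝ) ≃ₗ[ℝ] (Fin k → ℝ) :=
            LinearEquiv.ofBijective _ hbij
          let eH : (Fin k → ℝ) ≃ₜ (Fin k → ℝ) :=
            eL.toContinuousLinearEquiv.toHomeomorph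
          let σH : (Fin k → ℝ) ≃ₜ (Fin k → ℝ) :=
            Homeomorph.piCongrRight fun _ => leakyHomeo α hα
          refine Or.inl ⟨ψ.trans (eH.trans ((Homeomorph.addRight b0).trans σH)), A, b, ?_⟩
          intro x
          have : (fun i => leakyReLU α (f x i)) =
              (ψ.trans (eH.trans ((Homeomorph.addRight b0).trans σH))) x := by
            funext i
            simp only [Homeomorph.trans_apply, Homeomorph.coe_addRight]
            have hfx : f x = A0.mulVec (ψ x) + b0 := hfeq x
            have heH : eH (ψ x) = A0.mulVec (ψ x) := rfl
            simp only [σH, Homeomorph.piCongrRight, heH]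
            simp [leakyHomeo, hfx]
          simp only [this]
        · -- not injective: kernel vector
          rw [← LinearMap.ker_eq_bot] at hinj
          obtain ⟨u, hu1, hu2⟩ := Submodule.exists_mem_ne_zero_of_ne_bot hinj
          refine Or.inr ⟨ψ, u, hu2, ?_⟩
          intro x t
          have hku : A0.mulVec u = 0 := hu1
          have hfix : f (ψ.symm (ψ x + t • u)) = f x := by
            rw [hfeq, hfeq, Homeomorph.apply_symm_apply, Matrix.mulVec_add,
              Matrix.mulVec_smul, hku]
            simp
          simp only [hfix]
      · -- already invariant along curves
        refine Or.inr ⟨ψ, u, hu, ?_⟩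
        intro x t
        simp only [hinv x t]

/-- Exit lemma: starting at `x0`, the curve `s ↦ ψ.symm (ψ x0 + s • u)` reaches
the sphere of radius `r` around `x0` at some `s ≥ 0`. -/
lemma exit_sphere {dx : ℕ} (ψ : (Fin dx → ℝ) ≃ₜ (Fin dx → ℝ)) (u : Fin dx → ℝ)
    (hu : u ≠ 0) (x0 : Fin dx → ℝ) (r : ℝ) (hr : 0 < r) :
    ∃ s : ℝ, 0 ≤ s ∧ ‖ψ.symm (ψ x0 + s • u) - x0‖ = r := by
  set γ : ℝ → (Fin dx → ℝ) := fun s => ψ.symm (ψ x0 + s • u) with hγ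
  have hγc : Continuous γ := by
    apply ψ.symm.continuous.comp
    fun_prop
  have hγ0 : γ 0 = x0 := by simp [hγ]
  have hunorm : 0 < ‖u‖ := norm_pos_iff.mpr hu
  -- find T with ‖γ T - x0‖ > r
  have hT : ∃ T : ℝ, 0 ≤ T ∧ r ≤ ‖γ T - x0‖ := by
    by_contra hcon
    push_neg at hcon
    have hsub : ∀ T : ℝ, 0 ≤ T → γ T ∈ Metric.closedBall x0 r := by
      intro T hT0
      rcases hcon T hT0 with h
      simp [Metric.mem_closedBall, dist_eq_norm]
      linarith
    have hcomp : IsCompact (ψ '' Metric.closedBall x0 r) :=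
      (isCompact_closedBall x0 r).image ψ.continuous
    rcases hcomp.isBounded.subset_closedBall 0 with ⟨C, hC⟩
    have key : ∀ T : ℝ, 0 ≤ T → ‖ψ x0 + T • u‖ ≤ C := by
      intro T hT0
      have : ψ (γ T) ∈ ψ '' Metric.closedBall x0 r := ⟨γ T, hsub T hT0, rfl⟩
      have := hC this
      simpa [hγ, dist_eq_norm] using this
    set T := (C + ‖ψ x0‖ + 1) / ‖u‖ with hTdef
    have hT0 : 0 ≤ T := by
      apply div_nonneg _ hunorm.le
      have : 0 ≤ C := le_trans (norm_nonneg _) (by simpa using key 0 le_rfl)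
      positivity
    have h1 : ‖ψ x0 + T • u‖ ≤ C := key T hT0
    have h2 : T * ‖u‖ ≤ ‖ψ x0 + T • u‖ + ‖ψ x0‖ := by
      have h3 : ‖T • u‖ = T * ‖u‖ := by
        rw [norm_smul, Real.norm_eq_abs, abs_of_nonneg hT0]
      have h4 : T • u = (ψ x0 + T • u) - ψ x0 := by abel
      calc T * ‖u‖ = ‖T • u‖ := h3.symm
        _ = ‖(ψ x0 + T • u) - ψ x0‖ := by rw [← h4]
        _ ≤ ‖ψ x0 + T • u‖ + ‖ψ x0‖ := norm_sub_le _ _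
    have h5 : T * ‖u‖ = C + ‖ψ x0‖ + 1 := by
      rw [hTdef, div_mul_cancel₀ _ hunorm.ne']
    linarith
  rcases hT with ⟨T, hT0, hTr⟩
  have hcont : ContinuousOn (fun s => ‖γ s - x0‖) (Set.Icc 0 T) :=
    (hγc.sub continuous_const).norm.continuousOn
  have := intermediate_value_Icc hT0 hcont
  have hmem : r ∈ Set.Icc ‖γ 0 - x0‖ ‖γ T - x0‖ := by
    constructor
    · rw [hγ0]; simp [hr.le]
    · exact hTr
  rcases this hmem with ⟨s, hs, hval⟩
  exact ⟨s, hs.1, hval⟩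

/-- necessity of width `d_x + 1`: if `m ≤ d_x`, width-`m`
Leaky-ReLU networks are not dense in `C(K; ℝ^{d_y})` for the uniform norm. -/
theorem leaky_relu_min_width_necessity
    (dx dy : ℕ) (hdx : 1 ≤ dx) (hdy : 1 ≤ dy)
    (α : ℝ) (hα : α ∈ Set.Ioi (0 : ℝ) \ {1})
    (K : Set (Fin dx → ℝ)) (hK : IsCompact K) (hKint : (interior K).Nonempty)
    (m : ℕ) (hm : m ≤ dx) :
    ¬ ∀ g : (Fin dx → ℝ) → (Fin dy → ℝ), ContinuousOn g K →
        ∀ ε : ℝ, 0 < ε →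
          ∃ F : (Fin dx → ℝ) → (Fin dy → ℝ),
            IsLeakyNet α m dx F ∧ ∀ x ∈ K, ‖F x - g x‖ < ε := by
  intro hdense
  have hα0 : 0 < α := hα.1
  -- a closed ball inside K
  obtain ⟨x0, hx0⟩ := hKint
  obtain ⟨ρ, hρ0, hball⟩ := Metric.isOpen_iff.mp isOpen_interior x0 hx0
  set r : ℝ := ρ / 2 with hrdef
  have hr0 : 0 < r := by positivity
  have hBK : Metric.closedBall x0 r ⊆ K := by
    intro y hy
    apply interior_subset
    apply hball
    simp only [Metric.mem_ball]
    have : dist y x0 ≤ r := Metric.mem_closedBall.mp hy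
    linarith
  -- bump target
  set g : (Fin dx → ℝ) → (Fin dy → ℝ) := fun x _ => max 0 (1 - ‖x - x0‖ / r) with hgdef
  have hgc : ContinuousOn g K := by
    apply Continuous.continuousOn
    apply continuous_pi
    intro i
    fun_prop
  obtain ⟨F, hFnet, hclose⟩ := hdense g hgc (1/3) (by norm_num)
  -- indices
  set j : Fin dy := ⟨0, hdy⟩ with hjdef
  -- invariant
  have hinv := leakyInv_of_net hα0 hm hFnet
  -- produce a sphere point where F is at least its center value
  have key : ∃ y : Fin dx → ℝ, ‖y - x0‖ = r ∧ F x0 j ≤ F y j := by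
    rcases hinv with ⟨ψ, A, b, hFeq⟩ | ⟨ψ, u, hu, hcurve⟩
    · set a : Fin dx → ℝ := A j with hadef
      by_cases ha : a = 0
      · -- F · j is constant; any sphere point works
        set e0 : Fin dx → ℝ := Pi.single (⟨0, hdx⟩ : Fin dx) 1 with he0
        have he0ne : e0 ≠ 0 := by
          intro h
          have := congrFun h (⟨0, hdx⟩ : Fin dx)
          simp [he0] at this
        obtain ⟨s, _, hs⟩ := exit_sphere ψ e0 he0ne x0 r hr0
        refine ⟨ψ.symm (ψ x0 + s • e0), hs, ?_⟩
        rw [hFeq, hFeq, Homeomorph.apply_symm_apply]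
        have hmv : ∀ v : Fin dx → ℝ, (A.mulVec v + b) j = dotProduct a v + b j := by
          intro v; rfl
        rw [hmv, hmv, ha]
        simp
      · obtain ⟨s, hs0, hs⟩ := exit_sphere ψ a ha x0 r hr0
        refine ⟨ψ.symm (ψ x0 + s • a), hs, ?_⟩
        rw [hFeq, hFeq, Homeomorph.apply_symm_apply]
        have hmv : ∀ v : Fin dx → ℝ, (A.mulVec v + b) j = dotProduct a v + b j := by
          intro v; rfl
        rw [hmv, hmv, dotProduct_add, dotProduct_smul]
        have haa : 0 ≤ dotProduct a a := Finset.sum_nonneg fun i _ => mul_self_nonneg (a i)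
        have : 0 ≤ s • (dotProduct a a) := smul_nonneg hs0 haa
        simp only [smul_eq_mul] at this ⊢
        linarith
    · obtain ⟨s, _, hs⟩ := exit_sphere ψ u hu x0 r hr0
      exact ⟨ψ.symm (ψ x0 + s • u), hs, le_of_eq (congrFun (hcurve x0 s) j).symm⟩
  obtain ⟨y, hynorm, hyle⟩ := key
  have hyK : y ∈ K := hBK (by simp [Metric.mem_closedBall, dist_eq_norm, hynorm])
  have hx0K : x0 ∈ K := hBK (Metric.mem_closedBall_self hr0.le)
  -- values of g
  have hgx0 : g x0 j = 1 := by simp [hgdef]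
  have hgy : g y j = 0 := by
    simp [hgdef, hynorm, div_self hr0.ne']
  -- coordinatewise bounds
  have hb1 : |F x0 j - g x0 j| < 1/3 := by
    have h := norm_le_pi_norm (F x0 - g x0) j
    have := hclose x0 hx0K
    simp only [Pi.sub_apply, Real.norm_eq_abs] at h
    linarith
  have hb2 : |F y j - g y j| < 1/3 := by
    have h := norm_le_pi_norm (F y - g y) j
    have := hclose y hyK
    simp only [Pi.sub_apply, Real.norm_eq_abs] at h
    linarith
  rw [hgx0] at hb1
  rw [hgy] at hb2
  rw [abs_lt] at hb1 hb2
  simp only [sub_zero] at hb2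
  linarith
end
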